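/- arXiv:1908.03326 — 13 statements merged into one kernel-verified Lean document; each statement's English description precedes it below -/
import Mathlib

section
/- Let U be a Hilbert space, V a Banach space, a : U × V → 𝕂 a continuous sesquilinear form bounded by M, and suppose the uniform inf-sup condition holds with constant β > 0 on subspaces U_n, V_n of equal finite dimension. Then the Ritz projection Q_n : U → U_n defined by a(Q_n w, χ) = a(w, χ) for all χ ∈ V_n satisfies ‖Q_n‖ ≤ M/β, and the Galerkin solution u_n satisfies ‖u − u_n‖ ≤ (M/β) · dist(u, U_n). -/
open Metric Filter

/-- in a Hilbert space `U`, under the uniform inf-sup condition the Ritz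
projection `Qₙ` satisfies `‖Qₙ‖ ≤ M/β` and the Galerkin solution satisfies the
improved Céa estimate `‖u − uₙ‖ ≤ (M/β)·dist(u, Uₙ)`. -/
theorem stmt1 {𝕜 : Type*} [RCLike 𝕜]
    {U : Type*} [NormedAddCommGroup U] [InnerProductSpace 𝕜 U] [CompleteSpace U]
    {V : Type*} [NormedAddCommGroup V] [NormedSpace 𝕜 V] [CompleteSpace V]
    (a : U →L[𝕜] V →L[𝕜] 𝕜) (M : ℝ) (hM : 0 < M)
    (hbound : ∀ u v, ‖a u v‖ ≤ M * ‖u‖ * ‖v‖)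
    (Un : ℕ → Subspace 𝕜 U) (Vn : ℕ → Subspace 𝕜 V)
    (hUfin : ∀ n, FiniteDimensional 𝕜 (Un n)) (hVfin : ∀ n, FiniteDimensional 𝕜 (Vn n))
    (hdim : ∀ n, Module.finrank 𝕜 (Un n) = Module.finrank 𝕜 (Vn n))
    (hne : ∀ n, Un n ≠ ⊥) (hproper : ∀ n, Un n ≠ ⊤)
    (β : ℝ) (hβ : 0 < β)
    (hBNB : ∀ n, ∀ u ∈ Un n,
      β * ‖u‖ ≤ sSup {c : ℝ | ∃ v ∈ Vn n, ‖v‖ = 1 ∧ c = ‖a u v‖}) :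
    (∀ n (Q : U →L[𝕜] U),
      (∀ w : U, Q w ∈ Un n) → (∀ w : U, ∀ χ ∈ Vn n, a (Q w) χ = a w χ) →
        ‖Q‖ ≤ M / β) ∧
    (∀ (L : StrongDual 𝕜 V) (u : U), (∀ v : V, a u v = L v) →
      ∀ n, ∀ un ∈ Un n, (∀ χ ∈ Vn n, a un χ = L χ) →
        ‖u - un‖ ≤ (M / β) * infDist u (Un n : Set U)) := by
  -- Key fact: if z ∈ Un n and a z χ = a y χ for all χ ∈ Vn n, then β‖z‖ ≤ M‖y‖.
  have key : ∀ n, ∀ z ∈ Un n, ∀ y : U, (∀ χ ∈ Vn n, a z χ = a y χ) →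
      β * ‖z‖ ≤ M * ‖y‖ := by
    intro n z hz y hzy
    refine (hBNB n z hz).trans (Real.sSup_le ?_ (by positivity))
    rintro c ⟨v, hv, hv1, rfl⟩
    calc ‖a z v‖ = ‖a y v‖ := by rw [hzy v hv]
      _ ≤ M * ‖y‖ * ‖v‖ := hbound y v
      _ = M * ‖y‖ := by rw [hv1, mul_one]
  -- β ≤ M
  have hβM : β ≤ M := by
    obtain ⟨u₀, hu₀, hu₀ne⟩ := (Submodule.ne_bot_iff (Un 0)).mp (hne 0)
    have := key 0 u₀ hu₀ u₀ (fun _ _ => rfl)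
    have hn : (0:ℝ) < ‖u₀‖ := norm_pos_iff.mpr hu₀ne
    exact le_of_mul_le_mul_right (by linarith) hn
  constructor
  · -- Part 1 : operator norm bound for the Ritz projection
    intro n Q hQmem hQeq
    refine Q.opNorm_le_bound (by positivity) ?_
    intro w
    have h := key n (Q w) (hQmem w) w (hQeq w)
    rw [div_mul_eq_mul_div, le_div_iff₀ hβ]
    linarith [h]
  · -- Part 2 : improved Céa estimate
    intro L u hu n un hun hGal
    -- pointwise estimate against each w ∈ Un n
    have hpt : ∀ w ∈ Un n, ‖u - un‖ ≤ (M / β) * ‖u - w‖ := by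
      intro w hw
      set p : U := un - w with hp_def
      set q : U := u - un with hq_def
      have hpmem : p ∈ Un n := Submodule.sub_mem _ hun hw
      have hpq : p + q = u - w := by rw [hp_def, hq_def]; abel
      -- a q χ = 0 for χ ∈ Vn n
      have haq : ∀ χ ∈ Vn n, a q χ = 0 := by
        intro χ hχ
        have : a q χ = a u χ - a un χ := by
          rw [hq_def, map_sub]; simp
        rw [this, hu χ, hGal χ hχ, sub_self]
      by_cases hq0 : q = 0
      · rw [hq0, norm_zero]
        positivity
      by_cases hp0 : p = 0
      · have huw : u - w = q := by rw [← hpq, hp0, zero_add]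
        rw [huw]
        have h1 : (1:ℝ) ≤ M / β := (one_le_div hβ).mpr hβM
        nlinarith [norm_nonneg q]
      · have hpn : (0:ℝ) < ‖p‖ := norm_pos_iff.mpr hp0
        have hqn : (0:ℝ) < ‖q‖ := norm_pos_iff.mpr hq0
        set s : ℝ := ‖q‖ / ‖p‖ with hs_def
        set t : ℝ := ‖p‖ / ‖q‖ with ht_def
        set v : U := (s : 𝕜) • p + (t : 𝕜) • q with hv_def
        have hst : s * t = 1 := by
          rw [hs_def, ht_def, div_mul_div_comm, mul_comm ‖q‖, div_self (mul_pos hpn hqn).ne']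
        -- norm of v equals ‖u - w‖
        have hnv : ‖v‖ = ‖u - w‖ := by
          have h1 : ‖v‖ ^ 2 = ‖u - w‖ ^ 2 := by
            have hsp : s * ‖p‖ = ‖q‖ := by rw [hs_def]; field_simp
            have htq : t * ‖q‖ = ‖p‖ := by rw [ht_def]; field_simp
            have hcross : RCLike.re (inner 𝕜 ((s:𝕜) • p) ((t:𝕜) • q) : 𝕜)
                = RCLike.re (inner 𝕜 p q : 𝕜) := by
              rw [inner_smul_left, inner_smul_right, RCLike.conj_ofReal, ← mul_assoc,
                ← RCLike.ofReal_mul, hst]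
              simp
            have hns : ‖(s:𝕜) • p‖ = ‖q‖ := by
              rw [norm_smul, RCLike.norm_ofReal,
                abs_of_pos (by positivity : (0:ℝ) < s), hsp]
            have hnt : ‖(t:𝕜) • q‖ = ‖p‖ := by
              rw [norm_smul, RCLike.norm_ofReal,
                abs_of_pos (by positivity : (0:ℝ) < t), htq]
            rw [hv_def, ← hpq, norm_add_sq (𝕜 := 𝕜), norm_add_sq (𝕜 := 𝕜),
              hcross, hns, hnt]
            ring
          calc ‖v‖ = Real.sqrt (‖v‖ ^ 2) := (Real.sqrt_sq (norm_nonneg v)).symm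
            _ = Real.sqrt (‖u - w‖ ^ 2) := by rw [h1]
            _ = ‖u - w‖ := Real.sqrt_sq (norm_nonneg _)
        -- the element (s:𝕜) • p lies in Un n and matches v against Vn n
        have hz : ((s : 𝕜) • p) ∈ Un n := Submodule.smul_mem _ _ hpmem
        have hmatch : ∀ χ ∈ Vn n, a ((s : 𝕜) • p) χ = a v χ := by
          intro χ hχ
          rw [hv_def, map_add, map_smul]
          simp [haq χ hχ]
        have hkey := key n _ hz v hmatch
        have hzn : ‖(s : 𝕜) • p‖ = ‖q‖ := by
          rw [norm_smul, RCLike.norm_ofReal, abs_of_pos (by positivity : (0:ℝ) < s),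
            hs_def]
          field_simp
        rw [hzn, hnv] at hkey
        rw [div_mul_eq_mul_div, le_div_iff₀ hβ]
        linarith
    -- pass to the infimum
    have hnonempty : ((Un n : Set U)).Nonempty := ⟨0, Submodule.zero_mem _⟩
    have hMβ : (0:ℝ) < M / β := by positivity
    rw [← div_le_iff₀' hMβ]
    by_contra hcon
    rw [not_le, infDist_lt_iff hnonempty] at hcon
    obtain ⟨y, hy, hlt⟩ := hcon
    rw [dist_eq_norm] at hlt
    have h2 := mul_lt_mul_of_pos_left hlt hMβ
    rw [show M / β * (‖u - un‖ / (M / β)) = ‖u - un‖ by field_simp] at h2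
    linarith [hpt y hy]
end

section
/- Let P be a bounded projection on a Hilbert space H with P ≠ 0 and P ≠ Id. Then ‖P‖ = ‖Id − P‖. -/
open scoped InnerProductSpace

lemma kato_aux {𝕜 : Type*} [RCLike 𝕜]
    {H : Type*} [NormedAddCommGroup H] [InnerProductSpace 𝕜 H]
    (P : H →L[𝕜] H) (hproj : P.comp P = P) (h0 : P ≠ 0) :
    ‖ContinuousLinearMap.id 𝕜 H - P‖ ≤ ‖P‖ := by
  have hPP : ∀ x, P (P x) = P x := fun x => congrArg (fun T => T x) hproj
  have hpos : (0:ℝ) < ‖P‖ := norm_pos_iff.mpr h0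
  have hP1 : (1:ℝ) ≤ ‖P‖ := by
    have h := P.opNorm_comp_le P
    rw [hproj] at h
    nlinarith
  apply ContinuousLinearMap.opNorm_le_bound _ (le_of_lt hpos)
  intro x
  have hx : (ContinuousLinearMap.id 𝕜 H - P) x = x - P x := by
    simp [ContinuousLinearMap.sub_apply]
  rw [hx]
  set a := P x with ha
  set b := x - P x with hb
  by_cases hb0 : b = 0
  · rw [hb0, norm_zero]; positivity
  by_cases ha0 : a = 0
  · have hbx : b = x := by rw [hb, ← ha, ha0, sub_zero]
    rw [hbx]
    nlinarith [norm_nonneg x]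
  · have hna : 0 < ‖a‖ := norm_pos_iff.mpr ha0
    have hnb : 0 < ‖b‖ := norm_pos_iff.mpr hb0
    set s : ℝ := ‖b‖ / ‖a‖ with hs
    set t : ℝ := ‖a‖ / ‖b‖ with ht
    have hst : s * t = 1 := by rw [hs, ht]; field_simp
    have hsa : s * ‖a‖ = ‖b‖ := by rw [hs]; field_simp
    have htb : t * ‖b‖ = ‖a‖ := by rw [ht]; field_simp
    set y : H := (s:𝕜) • a + (t:𝕜) • b with hy
    have hPa : P a = a := hPP x
    have hPb : P b = 0 := by
      rw [hb, map_sub, ← ha, hPa, sub_self]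
    have hPy : P y = (s:𝕜) • a := by
      rw [hy, map_add, map_smul, map_smul, hPa, hPb, smul_zero, add_zero]
    have hyx : ‖y‖ = ‖x‖ := by
      have hxab : x = a + b := by rw [hb]; abel
      have h1 : ‖y‖^2 = ‖x‖^2 := by
        rw [hxab, hy, @norm_add_sq 𝕜, @norm_add_sq 𝕜, inner_smul_left,
          inner_smul_right, RCLike.conj_ofReal]
        rw [norm_smul, norm_smul]
        simp only [RCLike.norm_ofReal, abs_of_pos (show (0:ℝ) < s from div_pos hnb hna),
          abs_of_pos (show (0:ℝ) < t from div_pos hna hnb)]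
        rw [← mul_assoc, ← RCLike.ofReal_mul]
        have hst' : ((s * t : ℝ) : 𝕜) = 1 := by rw [hst]; norm_num
        rw [hst', one_mul, hsa, htb]
        ring
      have hy0 := norm_nonneg y
      have hx0 := norm_nonneg x
      exact le_antisymm (by nlinarith) (by nlinarith)
    calc ‖b‖ = ‖P y‖ := by
            rw [hPy, norm_smul, RCLike.norm_ofReal, abs_of_pos (div_pos hnb hna), ← hs, hsa]
      _ ≤ ‖P‖ * ‖y‖ := P.le_opNorm y
      _ = ‖P‖ * ‖x‖ := by rw [hyx]

/-- Kato's lemma: a bounded projection `P ≠ 0, Id` on a Hilbert space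
satisfies `‖P‖ = ‖Id − P‖`. -/
theorem stmt2 {𝕜 : Type*} [RCLike 𝕜]
    {H : Type*} [NormedAddCommGroup H] [InnerProductSpace 𝕜 H] [CompleteSpace H]
    (P : H →L[𝕜] H) (hproj : P.comp P = P) (h0 : P ≠ 0)
    (hid : P ≠ ContinuousLinearMap.id 𝕜 H) :
    ‖P‖ = ‖ContinuousLinearMap.id 𝕜 H - P‖ := by
  set Q := ContinuousLinearMap.id 𝕜 H - P with hQ
  have hPP : ∀ x, P (P x) = P x := fun x => congrArg (fun T => T x) hproj
  have hQproj : Q.comp Q = Q := by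
    ext x
    simp only [ContinuousLinearMap.comp_apply, hQ, ContinuousLinearMap.sub_apply,
      ContinuousLinearMap.id_apply, map_sub, hPP x]
    abel
  have hQ0 : Q ≠ 0 := by
    intro h
    apply hid
    have : ContinuousLinearMap.id 𝕜 H - P = 0 := h
    ext x
    have := congrArg (fun T => T x) this
    simp only [ContinuousLinearMap.sub_apply, ContinuousLinearMap.id_apply,
      ContinuousLinearMap.zero_apply] at this
    have h3 : x - P x = 0 := this
    rw [sub_eq_zero] at h3
    simpa using h3.symm
  have h1 := kato_aux P hproj h0
  have h2 := kato_aux Q hQproj hQ0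
  have hIQ : ContinuousLinearMap.id 𝕜 H - Q = P := by rw [hQ]; abel
  rw [hIQ] at h2
  linarith
end

section
/- Let U, V be separable reflexive Banach spaces, a : U × V → 𝕂 a continuous sesquilinear form, and (U_n), (V_n) approximating sequences with equal finite dimensions. Assume that for every n, a(u,χ) = 0 for all χ ∈ V_n with u ∈ U_n implies u = 0, and that for every L ∈ V' the discrete Galerkin solutions u_n satisfy sup_n ‖u_n‖ < ∞. Then the dual uniform inf-sup condition holds: there exists β* > 0 such that sup_{u ∈ U_n, ‖u‖=1} |a(u,v)| ≥ β*‖v‖ for all v ∈ V_n and all n. -/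
open Metric Filter

/-- if the discrete problems are uniquely solvable and the discrete
solutions stay bounded for each right-hand side `L`, then the dual uniform inf-sup
condition (BNB*) holds. -/
theorem stmt3 {𝕜 : Type*} [RCLike 𝕜]
    {U V : Type*} [NormedAddCommGroup U] [NormedSpace 𝕜 U] [CompleteSpace U]
    [NormedAddCommGroup V] [NormedSpace 𝕜 V] [CompleteSpace V]
    [TopologicalSpace.SeparableSpace U] [TopologicalSpace.SeparableSpace V]
    (hUrefl : Function.Bijective (NormedSpace.inclusionInDoubleDual 𝕜 U))
    (hVrefl : Function.Bijective (NormedSpace.inclusionInDoubleDual 𝕜 V))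
    (a : U →L[𝕜] V →L[𝕜] 𝕜) (M : ℝ)
    (hbound : ∀ u v, ‖a u v‖ ≤ M * ‖u‖ * ‖v‖)
    (Un : ℕ → Subspace 𝕜 U) (Vn : ℕ → Subspace 𝕜 V)
    (hUfin : ∀ n, FiniteDimensional 𝕜 (Un n)) (hVfin : ∀ n, FiniteDimensional 𝕜 (Vn n))
    (hne : ∀ n, Un n ≠ ⊥)
    (hdim : ∀ n, Module.finrank 𝕜 (Un n) = Module.finrank 𝕜 (Vn n))
    (hUapprox : ∀ u : U, Tendsto (fun n => infDist u (Un n : Set U)) atTop (nhds 0))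
    (hVapprox : ∀ v : V, Tendsto (fun n => infDist v (Vn n : Set V)) atTop (nhds 0))
    (huniq : ∀ n, ∀ u ∈ Un n, (∀ χ ∈ Vn n, a u χ = 0) → u = 0)
    (hbdd : ∀ L : StrongDual 𝕜 V, ∃ (un : ℕ → U) (C : ℝ),
      (∀ n, un n ∈ Un n ∧ ∀ χ ∈ Vn n, a (un n) χ = L χ) ∧ ∀ n, ‖un n‖ ≤ C) :
    ∃ βs : ℝ, 0 < βs ∧ ∀ n, ∀ v ∈ Vn n,
      βs * ‖v‖ ≤ sSup {c : ℝ | ∃ u ∈ Un n, ‖u‖ = 1 ∧ c = ‖a u v‖} := by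
  classical
  -- notation for the discrete dual norm
  set S : ℕ → V → ℝ := fun n v => sSup {c : ℝ | ∃ u ∈ Un n, ‖u‖ = 1 ∧ c = ‖a u v‖} with hS
  -- a unit vector in each `Un n`
  have hunit : ∀ n, ∃ u ∈ Un n, ‖u‖ = 1 := by
    intro n
    obtain ⟨x, hx, hx0⟩ := (Submodule.ne_bot_iff (Un n)).mp (hne n)
    refine ⟨(‖x‖ : 𝕜)⁻¹ • x, Submodule.smul_mem _ _ hx, ?_⟩
    have : ‖x‖ ≠ 0 := norm_ne_zero_iff.mpr hx0
    rw [norm_smul, norm_inv, RCLike.norm_ofReal, abs_of_nonneg (norm_nonneg x),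
      inv_mul_cancel₀ this]
  have hnonempty : ∀ n v, {c : ℝ | ∃ u ∈ Un n, ‖u‖ = 1 ∧ c = ‖a u v‖}.Nonempty := by
    intro n v
    obtain ⟨u, hu, hu1⟩ := hunit n
    exact ⟨‖a u v‖, u, hu, hu1, rfl⟩
  have hbdda : ∀ n v, BddAbove {c : ℝ | ∃ u ∈ Un n, ‖u‖ = 1 ∧ c = ‖a u v‖} := by
    intro n v
    refine ⟨M * ‖v‖, ?_⟩
    rintro c ⟨u, hu, hu1, rfl⟩
    calc ‖a u v‖ ≤ M * ‖u‖ * ‖v‖ := hbound u v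
      _ = M * ‖v‖ := by rw [hu1, mul_one]
  have hSnonneg : ∀ n v, 0 ≤ S n v := by
    intro n v
    obtain ⟨c, u, hu, hu1, rfl⟩ := hnonempty n v
    exact le_trans (norm_nonneg _) (le_csSup (hbdda n v) ⟨u, hu, hu1, rfl⟩)
  -- the key estimate `‖a u v‖ ≤ S n v * ‖u‖` for `u ∈ Un n`
  have hkey : ∀ n v, ∀ u ∈ Un n, ‖a u v‖ ≤ S n v * ‖u‖ := by
    intro n v u hu
    rcases eq_or_ne u 0 with rfl | hu0
    · simp
    · have hn : ‖u‖ ≠ 0 := norm_ne_zero_iff.mpr hu0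
      have h1 : ‖((‖u‖ : 𝕜)⁻¹ • u)‖ = 1 := by
        rw [norm_smul, norm_inv, RCLike.norm_ofReal, abs_of_nonneg (norm_nonneg u),
          inv_mul_cancel₀ hn]
      have hmem : ‖a ((‖u‖ : 𝕜)⁻¹ • u) v‖ ∈ {c : ℝ | ∃ u ∈ Un n, ‖u‖ = 1 ∧ c = ‖a u v‖} :=
        ⟨_, Submodule.smul_mem _ _ hu, h1, rfl⟩
      have hle := le_csSup (hbdda n v) hmem
      have heq : ‖a ((‖u‖ : 𝕜)⁻¹ • u) v‖ = ‖u‖⁻¹ * ‖a u v‖ := by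
        rw [map_smul, ContinuousLinearMap.smul_apply, norm_smul, norm_inv,
          RCLike.norm_ofReal, abs_of_nonneg (norm_nonneg u)]
      rw [heq] at hle
      have := mul_le_mul_of_nonneg_right hle (norm_nonneg u)
      calc ‖a u v‖ = ‖u‖⁻¹ * ‖a u v‖ * ‖u‖ := by field_simp
        _ ≤ S n v * ‖u‖ := this
  -- positivity of `S n v` for nonzero `v ∈ Vn n`, via linear algebra
  have hSpos : ∀ n, ∀ v ∈ Vn n, v ≠ 0 → 0 < S n v := by
    intro n v hv hv0
    haveI := hUfin n
    haveI := hVfin n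
    -- find `u ∈ Un n` with `a u v ≠ 0`
    have hex : ∃ u ∈ Un n, a u v ≠ 0 := by
      set B : (Un n) →ₗ[𝕜] Module.Dual 𝕜 (Vn n) :=
        { toFun := fun u => ((a u.1).toLinearMap).comp (Vn n).subtype
          map_add' := fun u w => by ext χ; simp
          map_smul' := fun c u => by ext χ; simp } with hB
      have hinj : Function.Injective B := by
        rw [injective_iff_map_eq_zero]
        intro u hu
        have : (u : U) = 0 := by
          refine huniq n u u.2 fun χ hχ => ?_
          exact LinearMap.congr_fun hu ⟨χ, hχ⟩
        exact Subtype.ext this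
      have hrank : Module.finrank 𝕜 (Un n) = Module.finrank 𝕜 (Module.Dual 𝕜 (Vn n)) := by
        rw [Subspace.dual_finrank_eq, hdim n]
      have hsurj : Function.Surjective B :=
        (LinearMap.injective_iff_surjective_of_finrank_eq_finrank hrank).mp hinj
      have hℓ : ∃ ℓ : Module.Dual 𝕜 (Vn n), ℓ ⟨v, hv⟩ ≠ 0 := by
        by_contra h
        push_neg at h
        have : (⟨v, hv⟩ : Vn n) = 0 := (Module.forall_dual_apply_eq_zero_iff 𝕜 _).mp h
        exact hv0 (by simpa using congrArg Subtype.val this)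
      obtain ⟨ℓ, hℓ⟩ := hℓ
      obtain ⟨u, rfl⟩ := hsurj ℓ
      exact ⟨u, u.2, hℓ⟩
    obtain ⟨u, hu, hau⟩ := hex
    have hu0 : u ≠ 0 := fun h => hau (by simp [h])
    have hn : (0:ℝ) < ‖u‖ := norm_pos_iff.mpr hu0
    have := hkey n v u hu
    have h1 : 0 < ‖a u v‖ := norm_pos_iff.mpr hau
    nlinarith [hSnonneg n v]
  -- Banach–Steinhaus
  have hBS : ∃ C', ∀ n, ∀ v ∈ Vn n, v ≠ 0 → (S n v)⁻¹ * ‖v‖ ≤ C' := by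
    set ι := Σ n : ℕ, {v : V // v ∈ Vn n ∧ v ≠ 0} with hι
    set g : ι → StrongDual 𝕜 V →L[𝕜] 𝕜 := fun i =>
      NormedSpace.inclusionInDoubleDual 𝕜 V ((((S i.1 i.2.1 : ℝ) : 𝕜))⁻¹ • i.2.1) with hg
    have hpt : ∀ L : StrongDual 𝕜 V, ∃ C, ∀ i, ‖g i L‖ ≤ C := by
      intro L
      obtain ⟨un, C, h1, h2⟩ := hbdd L
      refine ⟨C, ?_⟩
      rintro ⟨n, v, hv, hv0⟩
      have hSp := hSpos n v hv hv0
      have hLv : L v = a (un n) v := ((h1 n).2 v hv).symm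
      have hb : ‖L v‖ ≤ S n v * C := by
        rw [hLv]
        calc ‖a (un n) v‖ ≤ S n v * ‖un n‖ := hkey n v (un n) (h1 n).1
          _ ≤ S n v * C := mul_le_mul_of_nonneg_left (h2 n) (hSnonneg n v)
      have : g ⟨n, v, hv, hv0⟩ L = ((S n v : ℝ) : 𝕜)⁻¹ * L v := by
        simp [hg, NormedSpace.dual_def]
      rw [this, norm_mul, norm_inv, RCLike.norm_ofReal, abs_of_pos hSp]
      calc (S n v)⁻¹ * ‖L v‖ ≤ (S n v)⁻¹ * (S n v * C) :=
            mul_le_mul_of_nonneg_left hb (by positivity)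
        _ = C := by field_simp
    obtain ⟨C', hC'⟩ := banach_steinhaus hpt
    refine ⟨C', fun n v hv hv0 => ?_⟩
    have hnorm : ‖g ⟨n, v, hv, hv0⟩‖ = (S n v)⁻¹ * ‖v‖ := by
      have := (NormedSpace.inclusionInDoubleDualLi 𝕜 (E := V)).norm_map
        ((((S n v : ℝ) : 𝕜))⁻¹ • v)
      calc ‖g ⟨n, v, hv, hv0⟩‖ = ‖(((S n v : ℝ) : 𝕜))⁻¹ • v‖ := this
        _ = (S n v)⁻¹ * ‖v‖ := by
            rw [norm_smul, norm_inv, RCLike.norm_ofReal,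
              abs_of_pos (hSpos n v hv hv0)]
    rw [← hnorm]
    exact hC' ⟨n, v, hv, hv0⟩
  obtain ⟨C', hC'⟩ := hBS
  refine ⟨(max C' 1)⁻¹, by positivity, fun n v hv => ?_⟩
  rcases eq_or_ne v 0 with rfl | hv0
  · simp only [norm_zero, mul_zero]
    exact hSnonneg n 0
  · have hSp := hSpos n v hv hv0
    have h1 : (S n v)⁻¹ * ‖v‖ ≤ max C' 1 := le_trans (hC' n v hv hv0) (le_max_left _ _)
    have h2 : ‖v‖ ≤ max C' 1 * S n v := by
      have := mul_le_mul_of_nonneg_right h1 (le_of_lt hSp)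
      calc ‖v‖ = (S n v)⁻¹ * ‖v‖ * S n v := by field_simp
        _ ≤ max C' 1 * S n v := this
    have hmax : (0:ℝ) < max C' 1 := lt_of_lt_of_le one_pos (le_max_right _ _)
    calc (max C' 1)⁻¹ * ‖v‖ ≤ (max C' 1)⁻¹ * (max C' 1 * S n v) :=
          mul_le_mul_of_nonneg_left h2 (by positivity)
      _ = S n v := by field_simp
end

section
/- Let U and V be Hilbert spaces, a : U × V → 𝕂 a continuous sesquilinear form, and U_n ⊂ U, V_n ⊂ V finite-dimensional subspaces of equal dimension. For β > 0, the condition sup_{v ∈ V_n, ‖v‖ ≤ 1} |a(u,v)| ≥ β‖u‖ for all u ∈ U_n and all n is equivalent to the condition sup_{u ∈ U_n, ‖u‖ ≤ 1} |a(u,v)| ≥ β‖v‖ for all v ∈ V_n and all n. -/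
open Module Metric

/-- sSup of `‖g v‖` over the unit ball of a subspace equals the operator norm of the
restricted functional. -/
private lemma sup_eq_norm_restrict {𝕜 U V : Type*} [RCLike 𝕜]
    [NormedAddCommGroup U] [NormedSpace 𝕜 U]
    [NormedAddCommGroup V] [NormedSpace 𝕜 V]
    (a : U →L[𝕜] V →L[𝕜] 𝕜) (X : Subspace 𝕜 V) (u : U) :
    sSup {c : ℝ | ∃ v ∈ X, ‖v‖ ≤ 1 ∧ c = ‖a u v‖} = ‖(a u).comp X.subtypeL‖ := by
  rw [← ContinuousLinearMap.sSup_unitClosedBall_eq_norm ((a u).comp X.subtypeL)]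
  congr 1
  ext c
  constructor
  · rintro ⟨v, hv, h1, rfl⟩
    exact ⟨⟨v, hv⟩, mem_closedBall_zero_iff.2 h1, rfl⟩
  · rintro ⟨⟨v, hv⟩, h1, rfl⟩
    exact ⟨v, hv, mem_closedBall_zero_iff.1 h1, rfl⟩

/-- Key finite-dimensional lemma: a lower bound on `‖b u‖` transfers to `‖b.flip v‖`
when the dimensions agree. -/
private lemma key {𝕜 E F : Type*} [RCLike 𝕜]
    [NormedAddCommGroup E] [InnerProductSpace 𝕜 E]
    [NormedAddCommGroup F] [InnerProductSpace 𝕜 F]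
    [FiniteDimensional 𝕜 E] [FiniteDimensional 𝕜 F]
    (hdim : finrank 𝕜 E = finrank 𝕜 F)
    (b : E →L[𝕜] F →L[𝕜] 𝕜) {β : ℝ} (hβ : 0 < β)
    (hb : ∀ u : E, β * ‖u‖ ≤ ‖b u‖) (v : F) : β * ‖v‖ ≤ ‖b.flip v‖ := by
  haveI : CompleteSpace F := FiniteDimensional.complete 𝕜 F
  rcases eq_or_ne v 0 with rfl | hv
  · simp
  have hrank : finrank 𝕜 E = finrank 𝕜 (F →L[𝕜] 𝕜) := by
    rw [hdim, ← LinearEquiv.finrank_eq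
      (LinearMap.toContinuousLinearMap (𝕜 := 𝕜) (E := F) (F' := 𝕜))]
    exact (Subspace.dual_finrank_eq (K := 𝕜) (V := F)).symm
  have hinj : Function.Injective (b : E →ₗ[𝕜] F →L[𝕜] 𝕜) := by
    intro x y hxy
    rw [← sub_eq_zero, ← norm_eq_zero]
    have h0 : b (x - y) = 0 := by
      simp only [ContinuousLinearMap.coe_coe] at hxy
      rw [map_sub, hxy, sub_self]
    have := hb (x - y)
    rw [h0, norm_zero] at this
    nlinarith [norm_nonneg (x - y)]
  have hsurj := (LinearMap.injective_iff_surjective_of_finrank_eq_finrank hrank).mp hinj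
  obtain ⟨u, hu⟩ := hsurj ((InnerProductSpace.toDual 𝕜 F) v)
  simp only [ContinuousLinearMap.coe_coe] at hu
  have hnormbu : ‖b u‖ = ‖v‖ := by
    rw [hu]; exact (InnerProductSpace.toDual 𝕜 F).norm_map v
  have hu0 : (0 : ℝ) < ‖u‖ := by
    rcases eq_or_ne u 0 with rfl | h
    · exfalso; apply hv
      rw [map_zero, norm_zero] at hnormbu
      exact norm_eq_zero.mp hnormbu.symm
    · exact norm_pos_iff.mpr h
  have hv0 : (0 : ℝ) < ‖v‖ := norm_pos_iff.mpr hv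
  have hbuv : ‖b u v‖ = ‖v‖ ^ 2 := by
    have : b u v = (InnerProductSpace.toDual 𝕜 F v) v := by rw [hu]
    rw [this, InnerProductSpace.toDual_apply_apply, @inner_self_eq_norm_sq_to_K 𝕜,
      norm_pow, RCLike.norm_ofReal, abs_norm]
  have hx1 : ‖(‖u‖⁻¹ : 𝕜) • u‖ = 1 := by
    rw [norm_smul]
    simp [hu0.ne', norm_inv]
  have hle : ‖b.flip v ((‖u‖⁻¹ : 𝕜) • u)‖ ≤ ‖b.flip v‖ := by
    calc ‖b.flip v ((‖u‖⁻¹ : 𝕜) • u)‖ ≤ ‖b.flip v‖ * ‖(‖u‖⁻¹ : 𝕜) • u‖ :=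
          (b.flip v).le_opNorm _
      _ = ‖b.flip v‖ := by rw [hx1, mul_one]
  have hval : ‖b.flip v ((‖u‖⁻¹ : 𝕜) • u)‖ = ‖u‖⁻¹ * ‖v‖ ^ 2 := by
    rw [ContinuousLinearMap.flip_apply, map_smul, ContinuousLinearMap.smul_apply,
      norm_smul, hbuv]
    simp [norm_inv]
  refine le_trans ?_ hle
  rw [hval]
  have hβu : β * ‖u‖ ≤ ‖v‖ := by rw [← hnormbu]; exact hb u
  calc β * ‖v‖ = ‖u‖⁻¹ * (β * ‖u‖ * ‖v‖) := by
        rw [inv_mul_eq_div, eq_div_iff hu0.ne']; ring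
    _ ≤ ‖u‖⁻¹ * (‖v‖ * ‖v‖) := by
        gcongr
    _ = ‖u‖⁻¹ * ‖v‖ ^ 2 := by ring

/-- for Hilbert spaces and finite-dimensional subspaces of equal dimension,
the inf-sup condition with constant `β` is equivalent to its dual counterpart with the
same constant `β`. -/
theorem stmt4 {𝕜 : Type*} [RCLike 𝕜]
    {U V : Type*} [NormedAddCommGroup U] [InnerProductSpace 𝕜 U] [CompleteSpace U]
    [NormedAddCommGroup V] [InnerProductSpace 𝕜 V] [CompleteSpace V]
    (a : U →L[𝕜] V →L[𝕜] 𝕜)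
    (Un : ℕ → Subspace 𝕜 U) (Vn : ℕ → Subspace 𝕜 V)
    (hUfin : ∀ n, FiniteDimensional 𝕜 (Un n)) (hVfin : ∀ n, FiniteDimensional 𝕜 (Vn n))
    (hne : ∀ n, Un n ≠ ⊥)
    (hdim : ∀ n, Module.finrank 𝕜 (Un n) = Module.finrank 𝕜 (Vn n))
    (β : ℝ) (hβ : 0 < β) :
    (∀ n, ∀ u ∈ Un n,
        β * ‖u‖ ≤ sSup {c : ℝ | ∃ v ∈ Vn n, ‖v‖ ≤ 1 ∧ c = ‖a u v‖}) ↔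
    (∀ n, ∀ v ∈ Vn n,
        β * ‖v‖ ≤ sSup {c : ℝ | ∃ u ∈ Un n, ‖u‖ ≤ 1 ∧ c = ‖a u v‖}) := by
  have setdual : ∀ n (v : V), {c : ℝ | ∃ u ∈ Un n, ‖u‖ ≤ 1 ∧ c = ‖a u v‖}
      = {c : ℝ | ∃ u ∈ Un n, ‖u‖ ≤ 1 ∧ c = ‖a.flip v u‖} := by
    intro n v
    simp only [ContinuousLinearMap.flip_apply]
  constructor
  · intro h n v hv
    haveI := hUfin n; haveI := hVfin n
    set b : (Un n) →L[𝕜] (Vn n) →L[𝕜] 𝕜 :=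
      ((a.comp (Un n).subtypeL).flip.comp (Vn n).subtypeL).flip with hbdef
    have hcond : ∀ u : Un n, β * ‖u‖ ≤ ‖b u‖ := by
      intro u
      have h1 := h n u u.2
      rw [sup_eq_norm_restrict a (Vn n) u] at h1
      have heq : b u = (a (u : U)).comp (Vn n).subtypeL := by ext w; rfl
      rw [heq]
      exact h1
    have hk := key (hdim n) b hβ hcond ⟨v, hv⟩
    have heq : b.flip ⟨v, hv⟩ = (a.flip v).comp (Un n).subtypeL := by ext w; rfl
    rw [heq] at hk
    rw [setdual n v, sup_eq_norm_restrict a.flip (Un n) v]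
    exact hk
  · intro h n u hu
    haveI := hUfin n; haveI := hVfin n
    set b : (Un n) →L[𝕜] (Vn n) →L[𝕜] 𝕜 :=
      ((a.comp (Un n).subtypeL).flip.comp (Vn n).subtypeL).flip with hbdef
    have hcond : ∀ v : Vn n, β * ‖v‖ ≤ ‖b.flip v‖ := by
      intro v
      have h1 := h n v v.2
      rw [setdual n v, sup_eq_norm_restrict a.flip (Un n) v] at h1
      have heq : b.flip v = (a.flip (v : V)).comp (Un n).subtypeL := by ext w; rfl
      rw [heq]
      exact h1
    have hk := key (hdim n).symm b.flip hβ hcond ⟨u, hu⟩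
    rw [ContinuousLinearMap.flip_flip] at hk
    have heq : b ⟨u, hu⟩ = (a u).comp (Vn n).subtypeL := by ext w; rfl
    rw [heq] at hk
    rw [sup_eq_norm_restrict a (Vn n) u]
    exact hk
end

section
/- Let V be a separable Hilbert space and a : V × V → 𝕂 a continuous sesquilinear form. Then a is essentially coercive if and only if there exist a finite-rank orthogonal projection P on V and α > 0 such that |a(u,u)| + ‖Pu‖² ≥ α‖u‖² for all u ∈ V. -/
open Filter
open Filter

-- backward direction
theorem aux_bwd {𝕜 : Type*} [RCLike 𝕜]
    {V : Type*} [NormedAddCommGroup V] [InnerProductSpace 𝕜 V] [CompleteSpace V]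
    (a : V →L[𝕜] V →L[𝕜] 𝕜)
    (P : V →L[𝕜] V) (α : ℝ) (hα : 0 < α)
    (hfin : FiniteDimensional 𝕜 (LinearMap.range (P : V →ₗ[𝕜] V)))
    (hineq : ∀ u : V, α * ‖u‖ ^ 2 ≤ ‖a u u‖ + ‖P u‖ ^ 2)
    (u : ℕ → V)
    (hweak : ∀ f : V →L[𝕜] 𝕜, Tendsto (fun n => f (u n)) atTop (nhds 0))
    (ha : Tendsto (fun n => a (u n) (u n)) atTop (nhds 0)) :
    Tendsto (fun n => ‖u n‖) atTop (nhds 0) := by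
  classical
  set W : Submodule 𝕜 V := LinearMap.range (P : V →ₗ[𝕜] V) with hW
  haveI : FiniteDimensional 𝕜 W := hfin
  set b := stdOrthonormalBasis 𝕜 W with hb
  have hmem : ∀ n, P (u n) ∈ W := fun n => LinearMap.mem_range_self _ _
  have hPsq : Tendsto (fun n => ‖P (u n)‖ ^ 2) atTop (nhds 0) := by
    have hsum : ∀ n, ‖P (u n)‖ ^ 2 = ∑ i, ‖(inner 𝕜 ((b i : V)) (P (u n)) : 𝕜)‖ ^ 2 := by
      intro n
      have h1 : ‖P (u n)‖ = ‖(⟨P (u n), hmem n⟩ : W)‖ := rfl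
      rw [h1]
      have h2 := b.repr.norm_map (⟨P (u n), hmem n⟩ : W)
      rw [← h2, EuclideanSpace.norm_eq, Real.sq_sqrt (by positivity)]
      refine Finset.sum_congr rfl fun i _ => ?_
      rw [b.repr_apply_apply]
      rfl
    simp only [hsum]
    have h0 : (0 : ℝ) = ∑ _i : Fin (Module.finrank 𝕜 W), (0 : ℝ) := by simp
    rw [h0]
    apply tendsto_finset_sum
    intro i _
    have hf := hweak (((innerSL 𝕜 (b i : V)).comp P : V →L[𝕜] 𝕜) : V →L[𝕜] 𝕜)
    have : Tendsto (fun n => ‖(inner 𝕜 ((b i : V)) (P (u n)) : 𝕜)‖) atTop (nhds 0) := by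
      have := hf.norm
      simpa using this
    simpa using this.pow 2
  have h1 : Tendsto (fun n => ‖a (u n) (u n)‖ + ‖P (u n)‖ ^ 2) atTop (nhds 0) := by
    have := (ha.norm).add hPsq
    simpa using this
  have hsq : Tendsto (fun n => ‖u n‖ ^ 2) atTop (nhds 0) := by
    apply squeeze_zero (fun n => by positivity) (g := fun n => α⁻¹ * (‖a (u n) (u n)‖ + ‖P (u n)‖ ^ 2))
    · intro n
      rw [inv_mul_eq_div, le_div_iff₀ hα, mul_comm]
      exact hineq (u n)
    · simpa using h1.const_mul α⁻¹
  have hcomp : Tendsto ((fun x => Real.sqrt x) ∘ fun n => ‖u n‖ ^ 2) atTop (nhds 0) := by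
    have := (Real.continuous_sqrt.tendsto 0).comp hsq
    simpa using this
  have heq : (fun n => ‖u n‖) = (fun x => Real.sqrt x) ∘ fun n => ‖u n‖ ^ 2 :=
    funext fun n => (Real.sqrt_sq (norm_nonneg _)).symm
  rw [heq]; exact hcomp


theorem aux_fwd {𝕜 : Type*} [RCLike 𝕜]
    {V : Type*} [NormedAddCommGroup V] [InnerProductSpace 𝕜 V] [CompleteSpace V]
    [TopologicalSpace.SeparableSpace V]
    (a : V →L[𝕜] V →L[𝕜] 𝕜)
    (H : ∀ u : ℕ → V,
        (∀ f : V →L[𝕜] 𝕜, Tendsto (fun n => f (u n)) atTop (nhds 0)) →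
        Tendsto (fun n => a (u n) (u n)) atTop (nhds 0) →
        Tendsto (fun n => ‖u n‖) atTop (nhds 0)) :
    (∃ (P : V →L[𝕜] V) (α : ℝ), 0 < α ∧ P.comp P = P ∧
        (∀ u v : V, inner 𝕜 (P u) v = (inner 𝕜 u (P v) : 𝕜)) ∧
        FiniteDimensional 𝕜 (LinearMap.range (P : V →ₗ[𝕜] V)) ∧
        ∀ u : V, α * ‖u‖ ^ 2 ≤ ‖a u u‖ + ‖P u‖ ^ 2) := by
  classical
  by_contra hcon
  push_neg at hcon
  obtain ⟨x, hx⟩ := TopologicalSpace.exists_dense_seq V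
  set W : ℕ → Submodule 𝕜 V := fun n => Submodule.span 𝕜 (x '' Set.Iio n) with hWdef
  haveI hWfin : ∀ n, FiniteDimensional 𝕜 (W n) := fun n =>
    FiniteDimensional.span_of_finite 𝕜 ((Set.finite_Iio n).image x)
  set P : ℕ → V →L[𝕜] V := fun n => (W n).subtypeL.comp ((W n).orthogonalProjectionOnto) with hPdef
  have hPmem : ∀ n v, P n v ∈ W n := fun n v => Submodule.coe_mem _
  have hPapply : ∀ n v, P n v = ((W n).orthogonalProjectionOnto v : V) := fun n v => rfl
  have hidem : ∀ n, (P n).comp (P n) = P n := by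
    intro n
    ext v
    simp only [ContinuousLinearMap.comp_apply, hPapply]
    exact congrArg Subtype.val (Submodule.orthogonalProjectionOnto_mem_subspace_eq_self _)
  have hsym : ∀ n, ∀ u v : V, inner 𝕜 (P n u) v = (inner 𝕜 u (P n v) : 𝕜) := fun n u v =>
    Submodule.inner_starProjection_left_eq_right (W n) u v
  have hfin : ∀ n, FiniteDimensional 𝕜 (LinearMap.range (P n : V →ₗ[𝕜] V)) := by
    intro n
    have hle : LinearMap.range (P n : V →ₗ[𝕜] V) ≤ W n := by
      rintro v ⟨w, rfl⟩
      exact hPmem n w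
    exact Submodule.finiteDimensional_of_le hle
  -- extract bad sequence
  have key : ∀ n : ℕ, ∃ u : V, ‖u‖ = 1 ∧
      ‖a u u‖ + ‖P n u‖ ^ 2 < ((n : ℝ) + 1)⁻¹ := by
    intro n
    obtain ⟨w, hw⟩ := hcon (P n) ((n : ℝ) + 1)⁻¹ (by positivity) (hidem n) (hsym n) (hfin n)
    have hw0 : w ≠ 0 := by
      rintro rfl
      simp at hw
    have ht : (0:ℝ) < ‖w‖ := norm_pos_iff.2 hw0
    set c : 𝕜 := ((‖w‖⁻¹ : ℝ) : 𝕜) with hc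
    refine ⟨c • w, ?_, ?_⟩
    · rw [norm_smul, hc, RCLike.norm_ofReal, abs_of_pos (by positivity)]
      field_simp
    · have hnc : ‖c‖ = ‖w‖⁻¹ := by
        rw [hc, RCLike.norm_ofReal, abs_of_pos (by positivity)]
      have h1 : ‖a (c • w) (c • w)‖ = ‖w‖⁻¹ ^ 2 * ‖a w w‖ := by
        rw [map_smul]
        simp only [ContinuousLinearMap.smul_apply, map_smul, smul_smul, smul_eq_mul,
          norm_mul, norm_mul, hnc]
        ring
      have h2 : ‖P n (c • w)‖ ^ 2 = ‖w‖⁻¹ ^ 2 * ‖P n w‖ ^ 2 := by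
        rw [map_smul, norm_smul, hnc, mul_pow]
      rw [h1, h2, ← mul_add]
      have := hw
      calc ‖w‖⁻¹ ^ 2 * (‖a w w‖ + ‖P n w‖ ^ 2)
          < ‖w‖⁻¹ ^ 2 * (((n : ℝ) + 1)⁻¹ * ‖w‖ ^ 2) := by
            apply mul_lt_mul_of_pos_left hw
            positivity
        _ = ((n : ℝ) + 1)⁻¹ := by
            field_simp
  choose u hu1 hu2 using key
  -- properties of u
  have hbound : ∀ n, ‖P n (u n)‖ ≤ Real.sqrt (((n : ℝ) + 1)⁻¹) := by
    intro n
    rw [Real.le_sqrt (norm_nonneg _) (by positivity)]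
    have h := hu2 n
    nlinarith [norm_nonneg (a (u n) (u n))]
  have hinv : Tendsto (fun n : ℕ => ((n : ℝ) + 1)⁻¹) atTop (nhds 0) := by
    simpa [one_div] using tendsto_one_div_add_atTop_nhds_zero_nat (𝕜 := ℝ)
  have hPu : Tendsto (fun n => ‖P n (u n)‖) atTop (nhds 0) := by
    apply squeeze_zero (fun n => norm_nonneg _) hbound
    have hs := (Real.continuous_sqrt.tendsto 0).comp hinv
    rw [Real.sqrt_zero] at hs
    exact hs
  have haa : Tendsto (fun n => a (u n) (u n)) atTop (nhds 0) := by
    apply squeeze_zero_norm (fun n => ?_) hinv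
    have h := hu2 n
    nlinarith [sq_nonneg (‖P n (u n)‖)]
  -- distance to subspaces tends to zero
  have hdist : ∀ v : V, Tendsto (fun n => ‖v - P n v‖) atTop (nhds 0) := by
    intro v
    rw [Metric.tendsto_atTop]
    intro ε hε
    obtain ⟨k, hk⟩ := hx.exists_dist_lt v hε
    refine ⟨k + 1, fun n hn => ?_⟩
    have hxk : x k ∈ W n := Submodule.subset_span ⟨k, Set.mem_Iio.2 (by omega), rfl⟩
    have hle : ‖v - P n v‖ ≤ ‖v - x k‖ := by
      rw [hPapply, ← Submodule.starProjection_apply, Submodule.starProjection_minimal]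
      exact ciInf_le ⟨0, by rintro y ⟨i, rfl⟩; exact norm_nonneg _⟩ (⟨x k, hxk⟩ : W n)
    rw [Real.dist_eq, sub_zero, abs_of_nonneg (norm_nonneg _)]
    calc ‖v - P n v‖ ≤ ‖v - x k‖ := hle
      _ = dist v (x k) := (dist_eq_norm _ _).symm
      _ < ε := hk
  -- weak convergence
  have hweak : ∀ f : V →L[𝕜] 𝕜, Tendsto (fun n => f (u n)) atTop (nhds 0) := by
    intro f
    set v : V := (InnerProductSpace.toDual 𝕜 V).symm f with hv
    have hfv : ∀ w : V, f w = (inner 𝕜 v w : 𝕜) := fun w =>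
      (InnerProductSpace.toDual_symm_apply).symm
    have hPnorm : ∀ n (w : V), ‖P n w‖ ≤ ‖w‖ := by
      intro n w
      rw [hPapply]
      calc ‖((W n).orthogonalProjectionOnto w : V)‖ = ‖(W n).orthogonalProjectionOnto w‖ := rfl
        _ ≤ ‖(W n).orthogonalProjectionOnto‖ * ‖w‖ := ContinuousLinearMap.le_opNorm _ _
        _ ≤ 1 * ‖w‖ := by
            apply mul_le_mul_of_nonneg_right (Submodule.orthogonalProjectionOnto_norm_le _) (norm_nonneg _)
        _ = ‖w‖ := one_mul _
    have hkey : ∀ n, ‖f (u n)‖ ≤ ‖v‖ * ‖P n (u n)‖ + ‖v - P n v‖ * 2 := by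
      intro n
      have hsplit : (inner 𝕜 v (u n) : 𝕜) =
          inner 𝕜 v (P n (u n)) + inner 𝕜 (v - P n v) (u n - P n (u n)) := by
        have hz : (inner 𝕜 (P n v) (u n - P n (u n)) : 𝕜) = 0 := by
          have hmem' : u n - P n (u n) ∈ (W n)ᗮ := by
            rw [hPapply]
            exact Submodule.sub_starProjection_mem_orthogonal _
          exact (Submodule.mem_orthogonal (W n) _).1 hmem' (P n v) (hPmem n v)
        rw [inner_sub_left, hz, sub_zero, inner_sub_right]
        ring
      rw [hfv (u n), hsplit]
      calc ‖(inner 𝕜 v (P n (u n)) : 𝕜) + inner 𝕜 (v - P n v) (u n - P n (u n))‖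
          ≤ ‖(inner 𝕜 v (P n (u n)) : 𝕜)‖ + ‖(inner 𝕜 (v - P n v) (u n - P n (u n)) : 𝕜)‖ :=
            norm_add_le _ _
        _ ≤ ‖v‖ * ‖P n (u n)‖ + ‖v - P n v‖ * ‖u n - P n (u n)‖ := by
            gcongr <;> exact norm_inner_le_norm _ _
        _ ≤ ‖v‖ * ‖P n (u n)‖ + ‖v - P n v‖ * 2 := by
            gcongr
            calc ‖u n - P n (u n)‖ ≤ ‖u n‖ + ‖P n (u n)‖ := norm_sub_le _ _
              _ ≤ 1 + 1 := by
                  rw [hu1 n]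
                  gcongr
                  calc ‖P n (u n)‖ ≤ ‖u n‖ := hPnorm n (u n)
                    _ = 1 := hu1 n
              _ = 2 := by norm_num
    apply squeeze_zero_norm hkey
    have := (hPu.const_mul ‖v‖).add ((hdist v).mul_const 2)
    simpa using this
  have hfinal := H u hweak haa
  have hone : Tendsto (fun _ : ℕ => (1:ℝ)) atTop (nhds 0) := by
    simpa [hu1] using hfinal
  have := tendsto_nhds_unique hone tendsto_const_nhds
  norm_num at this

/-- a continuous sesquilinear form on a separable Hilbert space is
essentially coercive iff `|a(u,u)| + ‖Pu‖² ≥ α‖u‖²` for some finite-rank orthogonal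
projection `P` and some `α > 0`. -/
theorem stmt5 {𝕜 : Type*} [RCLike 𝕜]
    {V : Type*} [NormedAddCommGroup V] [InnerProductSpace 𝕜 V] [CompleteSpace V]
    [TopologicalSpace.SeparableSpace V]
    (a : V →L[𝕜] V →L[𝕜] 𝕜) :
    (∀ u : ℕ → V,
        (∀ f : V →L[𝕜] 𝕜, Tendsto (fun n => f (u n)) atTop (nhds 0)) →
        Tendsto (fun n => a (u n) (u n)) atTop (nhds 0) →
        Tendsto (fun n => ‖u n‖) atTop (nhds 0)) ↔
    (∃ (P : V →L[𝕜] V) (α : ℝ), 0 < α ∧ P.comp P = P ∧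
        (∀ u v : V, inner 𝕜 (P u) v = (inner 𝕜 u (P v) : 𝕜)) ∧
        FiniteDimensional 𝕜 (LinearMap.range (P : V →ₗ[𝕜] V)) ∧
        ∀ u : V, α * ‖u‖ ^ 2 ≤ ‖a u u‖ + ‖P u‖ ^ 2) := by
  constructor
  · exact aux_fwd a
  · rintro ⟨P, α, hα, _, _, hfin, hineq⟩ u hweak ha
    exact aux_bwd a P α hα hfin hineq u hweak ha
end

section
/- Let V be a separable Hilbert space and a : V × V → 𝕂 a continuous sesquilinear form. Then a is essentially coercive if and only if there exist a Hilbert space H, a compact operator J : V → H, and α > 0 such that |a(u,u)| + ‖Ju‖²_H ≥ α‖u‖²_V for all u ∈ V. -/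
open Filter
open scoped InnerProductSpace

section Aux

variable {𝕜 : Type*} [RCLike 𝕜] {V : Type*} [NormedAddCommGroup V] [InnerProductSpace 𝕜 V]

private instance auxCompleteSpan (s : Finset V) :
    CompleteSpace ↥(Submodule.span 𝕜 (s : Set V)) :=
  FiniteDimensional.complete 𝕜 _

private theorem aux_pack (U : Submodule 𝕜 V) [FiniteDimensional 𝕜 ↥U]
    [U.HasOrthogonalProjection] (c : ℝ) :
    ∃ (H : Type) (iN : NormedAddCommGroup H) (iIP : InnerProductSpace 𝕜 H)
      (iC : CompleteSpace H) (J : V →L[𝕜] H), IsCompactOperator ⇑J ∧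
      ∀ u : V, ‖J u‖ = |c| * ‖(U.orthogonalProjectionOnto u : V)‖ := by
  haveI hk : Small.{0} 𝕜 :=
    small_of_surjective (f := fun p : ℝ × ℝ => (p.1 : 𝕜) + (p.2 : 𝕜) * RCLike.I)
      fun z => ⟨(RCLike.re z, RCLike.im z), RCLike.re_add_im z⟩
  haveI : Small.{0} ↥U :=
    small_of_injective (Module.Free.chooseBasis 𝕜 ↥U).equivFun.injective
  let e : Shrink.{0} ↥U ≃ₗ[𝕜] ↥U := Shrink.linearEquiv 𝕜 (↥U)
  letI iN : NormedAddCommGroup (Shrink.{0} ↥U) := inferInstance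
  letI iIP : InnerProductSpace 𝕜 (Shrink.{0} ↥U) :=
    { inner := fun x y => ⟪e x, e y⟫_𝕜
      norm_sq_eq_re_inner := fun x => InnerProductSpace.norm_sq_eq_re_inner (𝕜 := 𝕜) (e x)
      conj_inner_symm := fun x y => inner_conj_symm _ _
      add_left := fun x y z => by simp [map_add, inner_add_left]
      smul_left := fun x y r => by simp [map_smul, inner_smul_left] }
  haveI : FiniteDimensional 𝕜 (Shrink.{0} ↥U) := Module.Finite.equiv e.symm
  letI iC : CompleteSpace (Shrink.{0} ↥U) := FiniteDimensional.complete 𝕜 _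
  haveI : ProperSpace (Shrink.{0} ↥U) := FiniteDimensional.proper 𝕜 _
  haveI hnorm : ∀ x : Shrink.{0} ↥U, ‖x‖ = ‖e x‖ := by
    intro x
    rw [@norm_eq_sqrt_re_inner 𝕜 (Shrink.{0} ↥U) _ _ _ x,
      @norm_eq_sqrt_re_inner 𝕜 (↥U) _ _ _ (e x)]
    rfl
  let eL : ↥U →L[𝕜] Shrink.{0} ↥U := LinearMap.toContinuousLinearMap e.symm.toLinearMap
  let J : V →L[𝕜] Shrink.{0} ↥U := ((c : ℝ) : 𝕜) • (eL.comp U.orthogonalProjectionOnto)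
  have hJ : ∀ u : V, ‖J u‖ = |c| * ‖(U.orthogonalProjectionOnto u : V)‖ := by
    intro u
    have h1 : J u = ((c : ℝ) : 𝕜) • eL (U.orthogonalProjectionOnto u) := rfl
    rw [h1, norm_smul, RCLike.norm_ofReal]
    congr 1
    have h2 : eL (U.orthogonalProjectionOnto u) = e.symm (U.orthogonalProjectionOnto u) := by
      simp [eL]
    rw [h2, hnorm, e.apply_symm_apply]
    rfl
  refine ⟨Shrink.{0} ↥U, iN, iIP, iC, J, ?_, hJ⟩
  refine ⟨Metric.closedBall 0 ‖J‖, isCompact_closedBall 0 ‖J‖,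
    Filter.mem_of_superset (Metric.closedBall_mem_nhds (0 : V) one_pos) ?_⟩
  intro u hu
  simp only [Metric.mem_closedBall, dist_zero_right] at hu
  simp only [Set.mem_preimage, Metric.mem_closedBall, dist_zero_right]
  calc ‖J u‖ ≤ ‖J‖ * ‖u‖ := J.le_opNorm u
  _ ≤ ‖J‖ * 1 := by gcongr
  _ = ‖J‖ := mul_one _

end Aux

/-- a continuous sesquilinear form on a separable Hilbert space is
essentially coercive iff `|a(u,u)| + ‖Ju‖² ≥ α‖u‖²` for some compact operator
`J : V → H` into a Hilbert space `H` and some `α > 0`. -/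
theorem stmt6 {𝕜 : Type*} [RCLike 𝕜]
    {V : Type*} [NormedAddCommGroup V] [InnerProductSpace 𝕜 V] [CompleteSpace V]
    [TopologicalSpace.SeparableSpace V]
    (a : V →L[𝕜] V →L[𝕜] 𝕜) (M : ℝ)
    (hbound : ∀ u v, ‖a u v‖ ≤ M * ‖u‖ * ‖v‖) :
    (∀ u : ℕ → V,
        (∀ f : StrongDual 𝕜 V, Tendsto (fun n => f (u n)) atTop (nhds 0)) →
        Tendsto (fun n => a (u n) (u n)) atTop (nhds 0) →
        Tendsto (fun n => ‖u n‖) atTop (nhds 0)) ↔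
    (∃ (H : Type) (_ : NormedAddCommGroup H) (_ : InnerProductSpace 𝕜 H)
        (_ : CompleteSpace H) (J : V →L[𝕜] H) (α : ℝ),
        0 < α ∧ IsCompactOperator J ∧
        ∀ u : V, α * ‖u‖ ^ 2 ≤ ‖a u u‖ + ‖J u‖ ^ 2) := by
  classical
  constructor
  · -- essential coercivity implies the compact-operator bound
    intro h
    by_contra hc
    -- dense sequence and finite-dimensional approximations
    let v : ℕ → V := TopologicalSpace.denseSeq V
    have hv : DenseRange v := TopologicalSpace.denseRange_denseSeq V
    let U : ℕ → Submodule 𝕜 V := fun n => Submodule.span 𝕜 (((Finset.range n).image v : Finset V) : Set V)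
    let P : ∀ n, V →L[𝕜] ↥(U n) := fun n => (U n).orthogonalProjectionOnto
    -- density of the projections
    have hdense : ∀ x : V,
        Tendsto (fun n => ‖x - (P n x : V)‖) atTop (nhds 0) := by
      intro x
      rw [Metric.tendsto_atTop]
      intro ε hε
      obtain ⟨k, hk⟩ := Metric.denseRange_iff.mp hv x ε hε
      refine ⟨k + 1, fun n hn => ?_⟩
      have hvk : v k ∈ U n := Submodule.subset_span (by
        simp only [Finset.coe_image, Set.mem_image, Finset.mem_coe, Finset.mem_range]
        exact ⟨k, by omega, rfl⟩)
      have hbdd : BddBelow (Set.range fun y : ↥(U n) => ‖x - (y : V)‖) :=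
        ⟨0, by rintro r ⟨w, rfl⟩; exact norm_nonneg _⟩
      have hle : ‖x - (P n x : V)‖ ≤ ‖x - v k‖ := by
        rw [show ‖x - (P n x : V)‖ = ⨅ y : ↥(U n), ‖x - (y : V)‖ from Submodule.starProjection_minimal x]
        exact ciInf_le_of_le hbdd (⟨v k, hvk⟩ : ↥(U n)) le_rfl
      rw [Real.dist_eq, sub_zero, abs_of_nonneg (norm_nonneg _)]
      calc ‖x - (P n x : V)‖ ≤ ‖x - v k‖ := hle
      _ < ε := by rwa [← dist_eq_norm]
    -- key: for each n there is a bad vector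
    have key : ∀ n : ℕ, ∃ u : V,
        ‖a u u‖ + (((n : ℝ) + 1) * ‖(P n u : V)‖) ^ 2 < (1 / ((n : ℝ) + 1)) * ‖u‖ ^ 2 := by
      intro n
      by_contra hall
      push_neg at hall
      obtain ⟨H, iN, iIP, iC, J, hJc, hJ⟩ := aux_pack (U n) ((n : ℝ) + 1)
      refine hc ⟨H, iN, iIP, iC, J, 1 / ((n : ℝ) + 1), by positivity, hJc, fun u => ?_⟩
      have h1 : ‖J u‖ ^ 2 = (((n : ℝ) + 1) * ‖(P n u : V)‖) ^ 2 := by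
        rw [hJ u, abs_of_nonneg (by positivity : (0:ℝ) ≤ (n : ℝ) + 1)]
      rw [h1]
      exact hall u
    choose u hu using key
    have hu0 : ∀ n, u n ≠ 0 := by
      intro n h0
      have := hu n
      rw [h0] at this
      simp at this
    -- normalize
    set cc : ℕ → 𝕜 := fun n => ((‖u n‖⁻¹ : ℝ) : 𝕜) with hcc
    set w : ℕ → V := fun n => cc n • u n with hwdef
    have ht : ∀ n, (0 : ℝ) < ‖u n‖ := fun n => norm_pos_iff.mpr (hu0 n)
    have hccn : ∀ n, ‖cc n‖ = ‖u n‖⁻¹ := by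
      intro n
      rw [hcc]
      simp [RCLike.norm_ofReal, abs_of_nonneg (inv_nonneg.mpr (norm_nonneg _))]
    have hw1 : ∀ n, ‖w n‖ = 1 := by
      intro n
      rw [hwdef]
      simp only [norm_smul, hccn]
      exact inv_mul_cancel₀ (ht n).ne'
    have haww : ∀ n, ‖a (w n) (w n)‖ = (‖u n‖⁻¹) ^ 2 * ‖a (u n) (u n)‖ := by
      intro n
      have h1 : a (w n) (w n) = cc n * (cc n * a (u n) (u n)) := by
        simp [hwdef, map_smul, smul_eq_mul]
      rw [h1, norm_mul, norm_mul, hccn]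
      ring
    have hPwn : ∀ n, ‖(P n (w n) : V)‖ = ‖u n‖⁻¹ * ‖(P n (u n) : V)‖ := by
      intro n
      have h1 : (P n (w n) : V) = cc n • (P n (u n) : V) := by
        simp [hwdef, map_smul]
      rw [h1, norm_smul, hccn]
    have hb : ∀ n, ‖a (w n) (w n)‖ + (((n : ℝ) + 1) * ‖(P n (w n) : V)‖) ^ 2
        < 1 / ((n : ℝ) + 1) := by
      intro n
      have ht2 : (0 : ℝ) < (‖u n‖⁻¹) ^ 2 := by have := ht n; positivity
      have h2 := mul_lt_mul_of_pos_left (hu n) ht2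
      calc ‖a (w n) (w n)‖ + (((n : ℝ) + 1) * ‖(P n (w n) : V)‖) ^ 2
          = (‖u n‖⁻¹) ^ 2 * (‖a (u n) (u n)‖ + (((n : ℝ) + 1) * ‖(P n (u n) : V)‖) ^ 2) := by
            rw [haww, hPwn]; ring
        _ < (‖u n‖⁻¹) ^ 2 * ((1 / ((n : ℝ) + 1)) * ‖u n‖ ^ 2) := h2
        _ = (‖u n‖⁻¹ ^ 2 * ‖u n‖ ^ 2) * (1 / ((n : ℝ) + 1)) := by ring
        _ = 1 / ((n : ℝ) + 1) := by
            rw [← mul_pow, inv_mul_cancel₀ (ht n).ne']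
            norm_num
    have hlim : Tendsto (fun n : ℕ => 1 / ((n : ℝ) + 1)) atTop (nhds 0) :=
      tendsto_one_div_add_atTop_nhds_zero_nat
    -- the projections of w n tend to zero
    have hq0 : Tendsto (fun n : ℕ => (((n : ℝ) + 1) * ‖(P n (w n) : V)‖) ^ 2) atTop (nhds 0) := by
      refine squeeze_zero (fun n => by positivity) (fun n => ?_) hlim
      have := hb n
      nlinarith [norm_nonneg (a (w n) (w n))]
    have hq1 : Tendsto (fun n : ℕ => ((n : ℝ) + 1) * ‖(P n (w n) : V)‖) atTop (nhds 0) := by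
      have := (Real.continuous_sqrt.tendsto 0).comp hq0
      simp only [Function.comp_def, Real.sqrt_zero] at this
      refine this.congr fun n => ?_
      exact Real.sqrt_sq (by positivity)
    have hP0 : Tendsto (fun n => ‖(P n (w n) : V)‖) atTop (nhds 0) := by
      refine squeeze_zero (fun n => norm_nonneg _) (fun n => ?_) hq1
      nlinarith [norm_nonneg ((P n (w n) : V)), Nat.cast_nonneg (α := ℝ) n]
    -- a (w n) (w n) tends to zero
    have haw0 : Tendsto (fun n => a (w n) (w n)) atTop (nhds 0) := by
      rw [tendsto_zero_iff_norm_tendsto_zero]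
      refine squeeze_zero (fun n => norm_nonneg _) (fun n => ?_) hlim
      have := hb n
      nlinarith [sq_nonneg (((n : ℝ) + 1) * ‖(P n (w n) : V)‖)]
    -- weak convergence to zero
    have hPw1 : ∀ n, ‖(P n (w n) : V)‖ ≤ 1 := by
      intro n
      have h1 : ‖P n (w n)‖ ≤ ‖P n‖ * ‖w n‖ := (P n).le_opNorm (w n)
      have h2 : ‖(P n : V →L[𝕜] ↥(U n))‖ ≤ 1 := Submodule.orthogonalProjectionOnto_norm_le _
      calc ‖(P n (w n) : V)‖ = ‖P n (w n)‖ := rfl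
      _ ≤ ‖P n‖ * ‖w n‖ := h1
      _ ≤ 1 * 1 := by rw [hw1]; exact mul_le_mul_of_nonneg_right h2 zero_le_one
      _ = 1 := one_mul _
    have hweak : ∀ f : StrongDual 𝕜 V, Tendsto (fun n => f (w n)) atTop (nhds 0) := by
      intro f
      obtain ⟨x, rfl⟩ := (InnerProductSpace.toDual 𝕜 V).surjective f
      rw [tendsto_zero_iff_norm_tendsto_zero]
      have hbnd : ∀ n, ‖(InnerProductSpace.toDual 𝕜 V x) (w n)‖
          ≤ ‖x‖ * ‖(P n (w n) : V)‖ + ‖x - (P n x : V)‖ * 2 := by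
        intro n
        have horth : ⟪((P n x : V)), w n - (P n (w n) : V)⟫_𝕜 = 0 :=
          Submodule.inner_right_of_mem_orthogonal (SetLike.coe_mem _)
            (Submodule.sub_starProjection_mem_orthogonal (K := U n) (w n))
        have hdec : ⟪x, w n⟫_𝕜
            = ⟪x, (P n (w n) : V)⟫_𝕜 + ⟪x - (P n x : V), w n - (P n (w n) : V)⟫_𝕜 := by
          rw [inner_sub_left, horth, inner_sub_right]
          ring
        rw [InnerProductSpace.toDual_apply_apply, hdec]
        calc ‖⟪x, (P n (w n) : V)⟫_𝕜 + ⟪x - (P n x : V), w n - (P n (w n) : V)⟫_𝕜‖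
            ≤ ‖⟪x, (P n (w n) : V)⟫_𝕜‖ + ‖⟪x - (P n x : V), w n - (P n (w n) : V)⟫_𝕜‖ :=
              norm_add_le _ _
          _ ≤ ‖x‖ * ‖(P n (w n) : V)‖ + ‖x - (P n x : V)‖ * ‖w n - (P n (w n) : V)‖ := by
              gcongr <;> exact norm_inner_le_norm _ _
          _ ≤ ‖x‖ * ‖(P n (w n) : V)‖ + ‖x - (P n x : V)‖ * 2 := by
              gcongr
              calc ‖w n - (P n (w n) : V)‖ ≤ ‖w n‖ + ‖(P n (w n) : V)‖ := norm_sub_le _ _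
              _ ≤ 1 + 1 := by rw [hw1]; exact add_le_add le_rfl (hPw1 n)
              _ = 2 := by norm_num
      refine squeeze_zero (fun n => norm_nonneg _) hbnd ?_
      have h1 := hP0.const_mul ‖x‖
      have h2 := (hdense x).mul_const 2
      have := h1.add h2
      simpa using this
    have hcontra := h w hweak haw0
    have h1 : Tendsto (fun _ : ℕ => (1 : ℝ)) atTop (nhds 0) := by
      refine hcontra.congr fun n => ?_
      rw [hw1]
    exact one_ne_zero (tendsto_nhds_unique tendsto_const_nhds h1)
  · -- the compact-operator bound implies essential coercivity
    rintro ⟨H, iN, iIP, iC, J, α, hα, hJc, hineq⟩ u hw ha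
    -- boundedness via Banach–Steinhaus
    have hb : ∀ f : StrongDual 𝕜 V,
        ∃ C, ∀ n, ‖(NormedSpace.inclusionInDoubleDual 𝕜 V (u n)) f‖ ≤ C := by
      intro f
      obtain ⟨C, hC⟩ := ((hw f).norm.bddAbove_range)
      refine ⟨C, fun n => ?_⟩
      have := hC (Set.mem_range_self (f := fun n => ‖f (u n)‖) n)
      simpa [NormedSpace.dual_def] using this
    obtain ⟨C, hC⟩ := banach_steinhaus hb
    have hIso : ∀ x : V, ‖NormedSpace.inclusionInDoubleDual 𝕜 V x‖ = ‖x‖ := fun x =>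
      (NormedSpace.inclusionInDoubleDualLi 𝕜 (E := V)).norm_map x
    have hCu : ∀ n, ‖u n‖ ≤ C := fun n => by rw [← hIso (u n)]; exact hC n
    -- compactness: J (u n) tends to zero
    have hK : IsCompact (closure (⇑J '' Metric.closedBall 0 C)) := by
      have := IsCompactOperator.isCompact_closure_image_closedBall
        (f := (J : V →ₗ[𝕜] H)) (by exact hJc) C
      simpa using this
    have hJ0 : Tendsto (fun n => J (u n)) atTop (nhds 0) := by
      apply tendsto_of_subseq_tendsto
      intro ns hns
      obtain ⟨y, hyK, φ, hφ, hconv⟩ := hK.tendsto_subseq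
        (x := fun k => J (u (ns k)))
        (fun k => subset_closure ⟨u (ns k), by
          simp only [Metric.mem_closedBall, dist_zero_right]; exact hCu _, rfl⟩)
      have hy : y = 0 := by
        have h1 : Tendsto (fun k => ⟪y, J (u (ns (φ k)))⟫_𝕜) atTop (nhds ⟪y, y⟫_𝕜) :=
          tendsto_const_nhds.inner hconv
        have h2 : Tendsto (fun n => ⟪y, J (u n)⟫_𝕜) atTop (nhds 0) := by
          have := hw (((InnerProductSpace.toDual 𝕜 H) y).comp J)
          simpa [InnerProductSpace.toDual_apply_apply] using this
        have h3 := h2.comp (hns.comp hφ.tendsto_atTop)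
        have h4 : ⟪y, y⟫_𝕜 = 0 := tendsto_nhds_unique h1 h3
        exact inner_self_eq_zero.mp h4
      rw [hy] at hconv
      exact ⟨φ, hconv⟩
    -- conclude
    have hrhs : Tendsto (fun n => ‖a (u n) (u n)‖ + ‖J (u n)‖ ^ 2) atTop (nhds 0) := by
      have h1 : Tendsto (fun n => ‖a (u n) (u n)‖) atTop (nhds 0) := by
        simpa using ha.norm
      have h2 : Tendsto (fun n => ‖J (u n)‖ ^ 2) atTop (nhds 0) := by
        have := (hJ0.norm).pow 2
        simpa using this
      simpa using h1.add h2
    have h0 : Tendsto (fun n => α * ‖u n‖ ^ 2) atTop (nhds 0) :=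
      squeeze_zero (fun n => by positivity) (fun n => hineq (u n)) hrhs
    have hsq : Tendsto (fun n => ‖u n‖ ^ 2) atTop (nhds 0) := by
      have := h0.const_mul α⁻¹
      simpa [inv_mul_cancel_left₀ hα.ne'] using this
    have := (Real.continuous_sqrt.tendsto 0).comp hsq
    simp only [Function.comp_def, Real.sqrt_zero] at this
    refine this.congr fun n => ?_
    exact Real.sqrt_sq (norm_nonneg _)
end

section
/- Let V be a separable Hilbert space and a : V × V → 𝕂 a continuous essentially coercive sesquilinear form with associated operator 𝒜 : V → V'. Then the following are equivalent: (i) 𝒜 is bijective; (ii) 𝒜 is injective (uniqueness); (iii) 𝒜 is surjective (existence). -/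
open Filter

local notation "⟪" x ", " y "⟫" => inner _ x y

/-- Lax–Milgram-type bijectivity for a form coercive in the sense `α‖u‖² ≤ ‖b u u‖`. -/
lemma coercive_bijective {𝕜 : Type*} [RCLike 𝕜] {H : Type*} [NormedAddCommGroup H]
    [InnerProductSpace 𝕜 H] [CompleteSpace H]
    (b : H →L[𝕜] H →L[𝕜] 𝕜) {α : ℝ} (hα : 0 < α)
    (hc : ∀ u, α * ‖u‖ ^ 2 ≤ ‖b u u‖) :
    Function.Bijective fun u => b u := by
  have hlow : ∀ u : H, α * ‖u‖ ≤ ‖b u‖ := by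
    intro u
    rcases eq_or_ne u 0 with rfl | hu
    · simp
    · have h1 : α * ‖u‖ ^ 2 ≤ ‖b u‖ * ‖u‖ := (hc u).trans ((b u).le_opNorm u)
      have hn : 0 < ‖u‖ := norm_pos_iff.mpr hu
      nlinarith
  have hinj : Function.Injective fun u => b u := by
    intro u v huv
    have h0 : b (u - v) = 0 := by
      simp only [map_sub]
      simpa [sub_eq_zero] using huv
    have := hlow (u - v)
    rw [h0] at this
    simp only [norm_zero] at this
    have : ‖u - v‖ ≤ 0 := by nlinarith [norm_nonneg (u - v)]
    have : u - v = 0 := by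
      have h2 := le_antisymm this (norm_nonneg _)
      exact norm_eq_zero.mp h2
    exact sub_eq_zero.mp this
  constructor
  · exact hinj
  -- surjectivity via the Riesz representation
  intro φ
  set Bt : H → H := fun u => (InnerProductSpace.toDual 𝕜 H).symm (b u) with hBt
  have hBtinner : ∀ u v : H, (⟪Bt u, v⟫ : 𝕜) = b u v := fun u v =>
    InnerProductSpace.toDual_symm_apply
  have hBtnorm : ∀ u, ‖Bt u‖ = ‖b u‖ := fun u =>
    (InnerProductSpace.toDual 𝕜 H).symm.norm_map (b u)
  -- range of Bt is a submodule
  have hBtadd : ∀ u v, Bt (u + v) = Bt u + Bt v := by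
    intro u v; simp [hBt, map_add]
  have hBtsmul : ∀ (c : 𝕜) u, Bt ((starRingEnd 𝕜) c • u) = c • Bt u := by
    intro c u
    simp [hBt, map_smul, LinearIsometryEquiv.map_smulₛₗ]
  have hBtzero : Bt 0 = 0 := by simp [hBt]
  set K : Submodule 𝕜 H :=
    { carrier := Set.range Bt
      add_mem' := by
        rintro x y ⟨u, rfl⟩ ⟨v, rfl⟩
        exact ⟨u + v, hBtadd u v⟩
      zero_mem' := ⟨0, hBtzero⟩
      smul_mem' := by
        rintro c x ⟨u, rfl⟩
        exact ⟨(starRingEnd 𝕜) c • u, hBtsmul c u⟩ } with hK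
  -- Bt is antilipschitz and uniformly continuous, so its range is closed
  have hBtdist : ∀ u v : H, α * ‖u - v‖ ≤ ‖Bt u - Bt v‖ := by
    intro u v
    have : Bt u - Bt v = Bt (u - v) := by
      have := hBtadd (u - v) v
      simp only [sub_add_cancel] at this
      rw [this]; abel
    rw [this, hBtnorm]
    exact hlow (u - v)
  have halip : AntilipschitzWith (⟨α, hα.le⟩ : NNReal)⁻¹ Bt := by
    apply AntilipschitzWith.of_le_mul_dist
    intro u v
    have h := hBtdist u v
    rw [dist_eq_norm, dist_eq_norm]
    change ‖u - v‖ ≤ α⁻¹ * ‖Bt u - Bt v‖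
    rw [le_inv_mul_iff₀ hα]
    linarith
  have hBtcont : Continuous Bt := by
    apply Continuous.comp (LinearIsometryEquiv.continuous _) b.continuous
  have hBtlip : LipschitzWith ‖b‖₊ Bt := by
    apply LipschitzWith.of_dist_le_mul
    intro u v
    rw [dist_eq_norm, dist_eq_norm]
    have : Bt u - Bt v = Bt (u - v) := by
      have := hBtadd (u - v) v
      simp only [sub_add_cancel] at this
      rw [this]; abel
    rw [this, hBtnorm]
    exact b.le_opNorm (u - v)
  have hclosed : IsClosed (Set.range Bt) := halip.isClosed_range hBtlip.uniformContinuous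
  have hKclosed : IsClosed (K : Set H) := hclosed
  haveI : CompleteSpace K := hKclosed.completeSpace_coe
  have horth : Kᗮ = ⊥ := by
    rw [Submodule.eq_bot_iff]
    intro w hw
    have h1 : (⟪Bt w, w⟫ : 𝕜) = 0 := by
      have := (Submodule.mem_orthogonal K w).mp hw (Bt w) ⟨w, rfl⟩
      exact this
    rw [hBtinner] at h1
    have h2 := hc w
    rw [h1, norm_zero] at h2
    by_contra hw0
    have hn : 0 < ‖w‖ := norm_pos_iff.mpr hw0
    nlinarith [mul_pos hα (pow_pos hn 2)]
  have hKtop : K = ⊤ := Submodule.orthogonal_eq_bot_iff.mp horth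
  have hsurjBt : Function.Surjective Bt := by
    intro y
    have : y ∈ K := hKtop ▸ Submodule.mem_top
    exact this
  obtain ⟨u, hu⟩ := hsurjBt ((InnerProductSpace.toDual 𝕜 H).symm φ)
  refine ⟨u, ?_⟩
  have := congrArg (InnerProductSpace.toDual 𝕜 H) hu
  simpa [hBt] using this


lemma step1 {𝕜 : Type*} [RCLike 𝕜] {V : Type*} [NormedAddCommGroup V]
    [InnerProductSpace 𝕜 V] [CompleteSpace V]
    (a : V →L[𝕜] V →L[𝕜] 𝕜) (x : ℕ → V) (hx : DenseRange x)
    (hess : ∀ u : ℕ → V,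
        (∀ f : StrongDual 𝕜 V, Tendsto (fun n => f (u n)) atTop (nhds 0)) →
        Tendsto (fun n => a (u n) (u n)) atTop (nhds 0) →
        Tendsto (fun n => ‖u n‖) atTop (nhds 0)) :
    ∃ (n : ℕ) (α : ℝ), 0 < α ∧ ∀ u : V,
      α * ‖u‖ ^ 2 ≤ ‖a u u‖ + ∑ i ∈ Finset.range n, ‖(⟪x i, u⟫ : 𝕜)‖ ^ 2 := by
  by_contra hcon
  push_neg at hcon
  have key : ∀ n : ℕ, ∃ y : V, ‖y‖ = 1 ∧
      ‖a y y‖ + ∑ i ∈ Finset.range n, ‖(⟪x i, y⟫ : 𝕜)‖ ^ 2 < ((n : ℝ) + 1)⁻¹ := by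
    intro n
    obtain ⟨u, hu⟩ := hcon n (((n : ℝ) + 1)⁻¹) (by positivity)
    have hLHS : (0:ℝ) ≤ ‖a u u‖ + ∑ i ∈ Finset.range n, ‖(⟪x i, u⟫ : 𝕜)‖ ^ 2 := by
      positivity
    have hu0 : u ≠ 0 := by
      intro h0
      subst h0
      have h1 : (0:ℝ) ≤ ‖a 0 0‖ + ∑ i ∈ Finset.range n, ‖(⟪x i, (0:V)⟫ : 𝕜)‖ ^ 2 := by
        positivity
      have h2 : ((n:ℝ) + 1)⁻¹ * ‖(0:V)‖ ^ 2 = 0 := by simp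
      linarith
    have hnu : (0:ℝ) < ‖u‖ := norm_pos_iff.mpr hu0
    have hrpos : (0:ℝ) < ‖u‖⁻¹ := by positivity
    set c : 𝕜 := ((‖u‖⁻¹ : ℝ) : 𝕜) with hc
    have hnc : ‖c‖ = ‖u‖⁻¹ := by
      rw [hc, RCLike.norm_ofReal, abs_of_pos hrpos]
    set r : ℝ := ‖u‖⁻¹ with hr
    have hnorm1 : ‖c • u‖ = 1 := by
      rw [norm_smul, hnc, hr]
      field_simp
    refine ⟨c • u, hnorm1, ?_⟩
    have ha' : ‖a (c • u) (c • u)‖ = r ^ 2 * ‖a u u‖ := by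
      have he : a (c • u) (c • u) = c * (c * a u u) := by
        simp [smul_eq_mul]
      rw [he, norm_mul, norm_mul, hnc]
      ring
    have hi' : ∀ i, ‖(⟪x i, c • u⟫ : 𝕜)‖ ^ 2 = r ^ 2 * ‖(⟪x i, u⟫ : 𝕜)‖ ^ 2 := by
      intro i
      rw [inner_smul_right, norm_mul, hnc]
      ring
    have hsum : ∑ i ∈ Finset.range n, ‖(⟪x i, c • u⟫ : 𝕜)‖ ^ 2
        = r ^ 2 * ∑ i ∈ Finset.range n, ‖(⟪x i, u⟫ : 𝕜)‖ ^ 2 := by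
      rw [Finset.mul_sum]
      exact Finset.sum_congr rfl fun i _ => hi' i
    rw [ha', hsum, ← mul_add]
    have hr2 : r ^ 2 * ‖u‖ ^ 2 = 1 := by
      rw [hr]; field_simp
    calc r ^ 2 * (‖a u u‖ + ∑ i ∈ Finset.range n, ‖(⟪x i, u⟫ : 𝕜)‖ ^ 2)
        < r ^ 2 * (((n:ℝ) + 1)⁻¹ * ‖u‖ ^ 2) := by
          apply mul_lt_mul_of_pos_left hu (by positivity)
      _ = ((n:ℝ) + 1)⁻¹ := by rw [show r ^ 2 * (((n:ℝ)+1)⁻¹ * ‖u‖^2) = ((n:ℝ)+1)⁻¹ * (r^2 * ‖u‖^2) by ring, hr2, mul_one]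
  choose y hy1 hy2 using key
  have hinv : Tendsto (fun n : ℕ => ((n : ℝ) + 1)⁻¹) atTop (nhds 0) := by
    simpa only [one_div] using tendsto_one_div_add_atTop_nhds_zero_nat (𝕜 := ℝ)
  have hterm : ∀ i n, i < n → ‖(⟪x i, y n⟫ : 𝕜)‖ ^ 2 < ((n : ℝ) + 1)⁻¹ := by
    intro i n hin
    have hle : ‖(⟪x i, y n⟫ : 𝕜)‖ ^ 2 ≤ ∑ j ∈ Finset.range n, ‖(⟪x j, y n⟫ : 𝕜)‖ ^ 2 :=
      Finset.single_le_sum (f := fun j => ‖(⟪x j, y n⟫ : 𝕜)‖ ^ 2)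
        (fun j _ => by positivity) (Finset.mem_range.mpr hin)
    have := hy2 n
    nlinarith [norm_nonneg (a (y n) (y n))]
  have ha_tend : Tendsto (fun n => a (y n) (y n)) atTop (nhds 0) := by
    apply squeeze_zero_norm (fun n => ?_) hinv
    have := hy2 n
    have hs : (0:ℝ) ≤ ∑ j ∈ Finset.range n, ‖(⟪x j, y n⟫ : 𝕜)‖ ^ 2 := by positivity
    linarith
  have hweak : ∀ f : StrongDual 𝕜 V, Tendsto (fun n => f (y n)) atTop (nhds 0) := by
    intro f
    set w : V := (InnerProductSpace.toDual 𝕜 V).symm f with hw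
    have hfw : ∀ v, f v = (⟪w, v⟫ : 𝕜) := fun v =>
      (InnerProductSpace.toDual_symm_apply).symm
    rw [NormedAddCommGroup.tendsto_nhds_zero]
    intro ε hε
    obtain ⟨k, hk⟩ := hx.exists_dist_lt w (half_pos hε)
    have hev1 : ∀ᶠ n : ℕ in atTop, ((n : ℝ) + 1)⁻¹ < (ε / 2) ^ 2 :=
      Tendsto.eventually_lt_const (show (0:ℝ) < (ε/2)^2 by positivity) hinv
    filter_upwards [hev1, eventually_gt_atTop k] with n h1 h2
    have hxk : ‖(⟪x k, y n⟫ : 𝕜)‖ < ε / 2 := by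
      have := hterm k n h2
      have h3 : ‖(⟪x k, y n⟫ : 𝕜)‖ ^ 2 < (ε / 2) ^ 2 := lt_trans this h1
      exact lt_of_pow_lt_pow_left₀ 2 (by positivity) h3
    have hsplit : f (y n) = (⟪w - x k, y n⟫ : 𝕜) + (⟪x k, y n⟫ : 𝕜) := by
      rw [hfw, ← inner_add_left, sub_add_cancel]
    rw [hsplit]
    calc ‖(⟪w - x k, y n⟫ : 𝕜) + (⟪x k, y n⟫ : 𝕜)‖
        ≤ ‖(⟪w - x k, y n⟫ : 𝕜)‖ + ‖(⟪x k, y n⟫ : 𝕜)‖ := norm_add_le _ _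
      _ ≤ ‖w - x k‖ * ‖y n‖ + ‖(⟪x k, y n⟫ : 𝕜)‖ := by
          gcongr; exact norm_inner_le_norm _ _
      _ < ε / 2 + ε / 2 := by
          rw [hy1 n, mul_one]
          apply add_lt_add _ hxk
          rw [← dist_eq_norm]
          exact hk
      _ = ε := by ring
  have hfin := hess y hweak ha_tend
  have : Tendsto (fun _ : ℕ => (1 : ℝ)) atTop (nhds 0) := by
    have : (fun n => ‖y n‖) = fun _ : ℕ => (1:ℝ) := funext fun n => hy1 n
    rwa [this] at hfin
  have h01 : (0 : ℝ) = 1 := tendsto_nhds_unique this tendsto_const_nhds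
  norm_num at h01

set_option maxHeartbeats 2000000 in
lemma main_surj {𝕜 : Type*} [RCLike 𝕜] {V : Type*} [NormedAddCommGroup V]
    [InnerProductSpace 𝕜 V] [CompleteSpace V] [TopologicalSpace.SeparableSpace V]
    (a : V →L[𝕜] V →L[𝕜] 𝕜)
    (hess : ∀ u : ℕ → V,
        (∀ f : StrongDual 𝕜 V, Tendsto (fun n => f (u n)) atTop (nhds 0)) →
        Tendsto (fun n => a (u n) (u n)) atTop (nhds 0) →
        Tendsto (fun n => ‖u n‖) atTop (nhds 0))
    (hinj : ∀ u : V, (∀ v : V, a u v = 0) → u = 0) :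
    ∀ L : V →L[𝕜] 𝕜, ∃ u : V, ∀ v : V, a u v = L v := by
  haveI : Nonempty V := ⟨0⟩
  obtain ⟨x, hx⟩ := TopologicalSpace.exists_dense_seq V
  obtain ⟨n, α, hα, hineq⟩ := step1 a x hx hess
  set E : Submodule 𝕜 V := Submodule.span 𝕜 (Set.range fun i : Fin n => x i) with hE
  haveI : FiniteDimensional 𝕜 E :=
    FiniteDimensional.span_of_finite 𝕜 (Set.finite_range _)
  set W : Submodule 𝕜 V := Eᗮ with hW
  haveI : CompleteSpace W := E.isClosed_orthogonal.completeSpace_coe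
  -- the form is coercive on W
  have hxW : ∀ (u : W) (i : ℕ), i < n → (⟪x i, (u : V)⟫ : 𝕜) = 0 := by
    intro u i hi
    exact u.2 (x i) (Submodule.subset_span ⟨⟨i, hi⟩, rfl⟩)
  have hcoerV : ∀ u : W, α * ‖(u : V)‖ ^ 2 ≤ ‖a (u : V) (u : V)‖ := by
    intro u
    have h := hineq (u : V)
    have hz : ∑ i ∈ Finset.range n, ‖(⟪x i, (u : V)⟫ : 𝕜)‖ ^ 2 = 0 := by
      apply Finset.sum_eq_zero
      intro i hi
      rw [hxW u i (Finset.mem_range.mp hi)]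
      simp
    rw [hz, add_zero] at h
    exact h
  -- restricted form on W
  set b : W →L[𝕜] W →L[𝕜] 𝕜 := ((a.comp W.subtypeL).flip.comp W.subtypeL).flip with hbdef
  have hb : ∀ u v : W, b u v = a (u : V) (v : V) := fun u v => rfl
  have hcoer : ∀ u : W, α * ‖u‖ ^ 2 ≤ ‖b u u‖ := by
    intro u
    rw [hb]
    exact hcoerV u
  have hbij : Function.Bijective fun u => b u := coercive_bijective b hα hcoer
  have hbij' : Function.Bijective b.toLinearMap := hbij
  set β : W ≃ₗ[𝕜] (W →L[𝕜] 𝕜) := LinearEquiv.ofBijective b.toLinearMap hbij' with hβ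
  have hβapp : ∀ (w : W), β w = b w := fun w => rfl
  -- restriction of functionals to W
  set r0 : (V →L[𝕜] 𝕜) →ₗ[𝕜] (W →L[𝕜] 𝕜) :=
    { toFun := fun φ => φ.comp W.subtypeL
      map_add' := by intro φ ψ; ext v; simp
      map_smul' := by intro c φ; ext v; simp } with hr0
  have hr0app : ∀ (φ : V →L[𝕜] 𝕜) (v : W), r0 φ v = φ (v : V) := fun φ v => rfl
  -- the solution operator on W against data from E
  set G : E →ₗ[𝕜] W :=
    β.symm.toLinearMap ∘ₗ r0 ∘ₗ (ContinuousLinearMap.coeLM 𝕜 a) ∘ₗ E.subtype with hG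
  have hGapp : ∀ (e : E) (v : W), a ((G e : W) : V) (v : V) = a (e : V) (v : V) := by
    intro e v
    have h1 : β (G e) = r0 (a (e : V)) := by
      rw [hG]
      exact β.apply_symm_apply _
    have h2 : b (G e) v = r0 (a (e : V)) v := by
      rw [← hβapp, h1]
    rw [hb] at h2
    rw [h2, hr0app]
  -- the finite-dimensional reduced operator
  set d : ℕ := Module.finrank 𝕜 E with hd
  set bE : Module.Basis (Fin d) 𝕜 E := Module.finBasis 𝕜 E with hbE
  set J : E →ₗ[𝕜] V := E.subtype - W.subtype ∘ₗ G with hJ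
  have hJapp : ∀ e : E, J e = (e : V) - ((G e : W) : V) := fun e => rfl
  set Mop : E →ₗ[𝕜] (Fin d → 𝕜) :=
    { toFun := fun e i => a (J e) ((bE i : E) : V)
      map_add' := by
        intro e e'
        funext i
        simp [map_add]
      map_smul' := by
        intro c e
        funext i
        simp [map_smul] } with hM
  have hMapp : ∀ (e : E) (i : Fin d), Mop e i = a (J e) ((bE i : E) : V) := fun e i => rfl
  -- decomposition of V
  have hsup : E ⊔ W = ⊤ := Submodule.sup_orthogonal_of_hasOrthogonalProjection
  have hdec : ∀ v : V, ∃ (y : E) (z : W), v = (y : V) + (z : V) := by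
    intro v
    have hv : v ∈ E ⊔ W := by rw [hsup]; exact Submodule.mem_top
    obtain ⟨y, hy, z, hz, hyz⟩ := Submodule.mem_sup.mp hv
    exact ⟨⟨y, hy⟩, ⟨z, hz⟩, hyz.symm⟩
  -- key: if a u vanishes on W and on the basis of E then it vanishes
  have hvanish : ∀ u : V, (∀ w : W, a u (w : V) = 0) →
      (∀ i : Fin d, a u ((bE i : E) : V) = 0) → ∀ v : V, a u v = 0 := by
    intro u hW0 hE0 v
    have hEall : ∀ e : E, a u (e : V) = 0 := by
      set ψ : E →ₗ[𝕜] 𝕜 :=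
        { toFun := fun e => a u (e : V)
          map_add' := by intro e e'; simp
          map_smul' := by intro c e; simp } with hψ
      have : ψ = 0 := bE.ext fun i => hE0 i
      intro e
      have := congrArg (fun f => f e) this
      simpa [hψ] using this
    obtain ⟨y, z, rfl⟩ := hdec v
    rw [map_add, hEall y, hW0 z, add_zero]
  -- injectivity of the reduced operator
  have hMinj : Function.Injective Mop := by
    rw [injective_iff_map_eq_zero]
    intro e he
    have hu0 : ∀ v : V, a (J e) v = 0 := by
      apply hvanish
      · intro w
        rw [hJapp, map_sub, ContinuousLinearMap.sub_apply, hGapp, sub_self]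
      · intro i
        have := congrFun he i
        rwa [hMapp] at this
    have hJ0 : J e = 0 := hinj _ hu0
    rw [hJapp] at hJ0
    have hee : (e : V) = ((G e : W) : V) := sub_eq_zero.mp hJ0
    have hmem : (e : V) ∈ E ⊓ W := ⟨e.2, hee ▸ (G e).2⟩
    rw [E.inf_orthogonal_eq_bot] at hmem
    exact Subtype.ext (by simpa using hmem)
  -- surjectivity of the reduced operator
  have hrank : Module.finrank 𝕜 E = Module.finrank 𝕜 (Fin d → 𝕜) := by
    rw [Module.finrank_fin_fun, hd]
  have hMsurj : Function.Surjective Mop :=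
    (LinearMap.injective_iff_surjective_of_finrank_eq_finrank hrank).mp hMinj
  -- conclusion
  intro L
  set w0 : W := β.symm (r0 L) with hw0
  have hw0app : ∀ v : W, a ((w0 : W) : V) (v : V) = L (v : V) := by
    intro v
    have h1 : β w0 = r0 L := β.apply_symm_apply _
    have h2 : b w0 v = r0 L v := by rw [← hβapp, h1]
    rw [hb] at h2
    rw [h2, hr0app]
  obtain ⟨e, he⟩ := hMsurj (fun i => L ((bE i : E) : V) - a ((w0 : W) : V) ((bE i : E) : V))
  refine ⟨(w0 : V) + J e, ?_⟩
  have hfin : ∀ v : V, a ((w0 : V) + J e) v - L v = 0 := by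
    set u : V := (w0 : V) + J e with hu
    -- the functional v ↦ a u v - L v vanishes on W and on the basis of E
    have hW0 : ∀ w : W, a u (w : V) - L (w : V) = 0 := by
      intro w
      rw [hu, map_add, ContinuousLinearMap.add_apply, hw0app, hJapp, map_sub,
        ContinuousLinearMap.sub_apply, hGapp]
      ring
    have hE0 : ∀ i : Fin d, a u ((bE i : E) : V) - L ((bE i : E) : V) = 0 := by
      intro i
      have := congrFun he i
      rw [hMapp] at this
      rw [hu, map_add, ContinuousLinearMap.add_apply, this]
      ring
    -- package as a linear functional on V?  Use the decomposition instead.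
    intro v
    set ψ : E →ₗ[𝕜] 𝕜 :=
      { toFun := fun e' => a u (e' : V) - L (e' : V)
        map_add' := by intro e' e''; simp; ring
        map_smul' := by intro c e'; simp; ring } with hψ
    have hψ0 : ψ = 0 := bE.ext fun i => hE0 i
    have hEall : ∀ e' : E, a u (e' : V) - L (e' : V) = 0 := by
      intro e'
      have := congrArg (fun f => f e') hψ0
      simpa [hψ] using this
    obtain ⟨y, z, rfl⟩ := hdec v
    have := hEall y
    have := hW0 z
    simp only [map_add, ContinuousLinearMap.add_apply]
    linear_combination hEall y + hW0 z
  intro v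
  exact sub_eq_zero.mp (hfin v)


/-- Fredholm alternative for essentially coercive forms: for a continuous
essentially coercive form, well-posedness, uniqueness and existence are all equivalent. -/
theorem stmt9 {𝕜 : Type*} [RCLike 𝕜]
    {V : Type*} [NormedAddCommGroup V] [InnerProductSpace 𝕜 V] [CompleteSpace V]
    [TopologicalSpace.SeparableSpace V]
    (a : V →L[𝕜] V →L[𝕜] 𝕜) (M : ℝ)
    (hbound : ∀ u v, ‖a u v‖ ≤ M * ‖u‖ * ‖v‖)
    (hess : ∀ u : ℕ → V,
        (∀ f : StrongDual 𝕜 V, Tendsto (fun n => f (u n)) atTop (nhds 0)) →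
        Tendsto (fun n => a (u n) (u n)) atTop (nhds 0) →
        Tendsto (fun n => ‖u n‖) atTop (nhds 0)) :
    ((∀ L : StrongDual 𝕜 V, ∃! u : V, ∀ v : V, a u v = L v) ↔
      (∀ u : V, (∀ v : V, a u v = 0) → u = 0)) ∧
    ((∀ u : V, (∀ v : V, a u v = 0) → u = 0) ↔
      (∀ L : StrongDual 𝕜 V, ∃ u : V, ∀ v : V, a u v = L v)) := by
  have lemA : (∀ u : V, (∀ v : V, a u v = 0) → u = 0) →
      ∀ L : StrongDual 𝕜 V, ∃ u : V, ∀ v : V, a u v = L v :=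
    fun hU L => main_surj a hess hU L
  have hessflip : ∀ u : ℕ → V,
      (∀ f : StrongDual 𝕜 V, Tendsto (fun n => f (u n)) atTop (nhds 0)) →
      Tendsto (fun n => a.flip (u n) (u n)) atTop (nhds 0) →
      Tendsto (fun n => ‖u n‖) atTop (nhds 0) := by
    intro u h1 h2
    apply hess u h1
    simpa only [ContinuousLinearMap.flip_apply] using h2
  have lemA' : (∀ u : V, (∀ v : V, a v u = 0) → u = 0) →
      ∀ L : StrongDual 𝕜 V, ∃ u : V, ∀ v : V, a v u = L v := by
    intro hU' L
    obtain ⟨u, hu⟩ := main_surj a.flip hessflip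
      (fun u h => hU' u (fun v => by simpa using h v)) L
    exact ⟨u, fun v => by simpa using hu v⟩
  have e2 : (∀ L : StrongDual 𝕜 V, ∃ u : V, ∀ v : V, a u v = L v) →
      ∀ w : V, (∀ v : V, a v w = 0) → w = 0 := by
    intro hEx w hw
    obtain ⟨u, hu⟩ := hEx (innerSL 𝕜 w)
    have h1 : a u w = (⟪w, w⟫ : 𝕜) := hu w
    rw [hw u] at h1
    exact inner_self_eq_zero.mp h1.symm
  have e1 : (∀ L : StrongDual 𝕜 V, ∃ u : V, ∀ v : V, a v u = L v) →
      ∀ u : V, (∀ v : V, a u v = 0) → u = 0 := by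
    intro hEx' u0 hu0
    obtain ⟨w, hw⟩ := hEx' (innerSL 𝕜 u0)
    have h1 : a u0 w = (⟪u0, u0⟫ : 𝕜) := hw u0
    rw [hu0 w] at h1
    exact inner_self_eq_zero.mp h1.symm
  constructor
  · constructor
    · intro hWP u hu
      obtain ⟨z, hz, huniq⟩ := hWP 0
      have h1 := huniq u (fun v => by simpa using hu v)
      have h2 := huniq 0 (fun v => by simp)
      rw [h1, h2]
    · intro hU L
      obtain ⟨u, hu⟩ := lemA hU L
      refine ⟨u, hu, ?_⟩
      intro u' hu'
      have hz : ∀ v, a (u' - u) v = 0 := by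
        intro v
        rw [map_sub, ContinuousLinearMap.sub_apply, hu v, hu' v, sub_self]
      have h0 := hU _ hz
      rwa [sub_eq_zero] at h0
  · constructor
    · exact lemA
    · intro hEx
      exact e1 (lemA' (e2 hEx))
end

section
/- Let V be a separable Hilbert space. The set of essentially coercive operators 𝒜 ∈ L(V, V') is open in L(V, V'), and if 𝒜 is essentially coercive and 𝒦 ∈ L(V, V') is compact, then 𝒜 + 𝒦 is essentially coercive. -/
/-- An operator `𝒜 : V → V'` is essentially coercive if some compact perturbation of it
is coercive. -/
def EssentiallyCoerciveOp {𝕜 : Type*} [RCLike 𝕜]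
    {V : Type*} [NormedAddCommGroup V] [InnerProductSpace 𝕜 V] [CompleteSpace V]
    (A : V →L[𝕜] StrongDual 𝕜 V) : Prop :=
  ∃ (K : V →L[𝕜] StrongDual 𝕜 V) (α : ℝ), 0 < α ∧ IsCompactOperator K ∧
    ∀ u : V, α * ‖u‖ ^ 2 ≤ ‖(A + K) u u‖

/-- the essentially coercive operators form an open subset of
`L(V, V')`, and essential coercivity is stable under compact perturbations. -/
theorem stmt10 {𝕜 : Type*} [RCLike 𝕜]
    {V : Type*} [NormedAddCommGroup V] [InnerProductSpace 𝕜 V] [CompleteSpace V]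
    [TopologicalSpace.SeparableSpace V] :
    IsOpen {A : V →L[𝕜] StrongDual 𝕜 V | EssentiallyCoerciveOp A} ∧
    ∀ (A K : V →L[𝕜] StrongDual 𝕜 V),
      EssentiallyCoerciveOp A → IsCompactOperator K →
        EssentiallyCoerciveOp (A + K) := by
  constructor
  · refine (Metric.isOpen_iff (α := V →L[𝕜] StrongDual 𝕜 V)).mpr ?_
    rintro A ⟨K, α, hα, hK, hco⟩
    refine ⟨α, hα, fun B hB => ?_⟩
    rw [Metric.mem_ball] at hB
    replace hB : ‖B - A‖ < α := lt_of_eq_of_lt (dist_eq_norm B A).symm hB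
    refine ⟨K, α - ‖B - A‖, by linarith [norm_nonneg (B - A)], hK, fun u => ?_⟩
    have h1 : ‖(B - A) u u‖ ≤ ‖B - A‖ * ‖u‖ ^ 2 := by
      calc ‖(B - A) u u‖ ≤ ‖(B - A) u‖ * ‖u‖ := (((B - A) u)).le_opNorm u
        _ ≤ ‖B - A‖ * ‖u‖ * ‖u‖ := by
            gcongr; exact (B - A).le_opNorm u
        _ = ‖B - A‖ * ‖u‖ ^ 2 := by ring
    have h2 : (A + K) u u = (B + K) u u - (B - A) u u := by
      simp [ContinuousLinearMap.add_apply, ContinuousLinearMap.sub_apply]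
      ring
    have h3 : ‖(A + K) u u‖ ≤ ‖(B + K) u u‖ + ‖(B - A) u u‖ := by
      rw [h2]; exact norm_sub_le _ _
    have := hco u
    nlinarith [norm_nonneg ((B + K) u u)]
  · rintro A K ⟨K₀, α, hα, hK₀, hco⟩ hK
    refine ⟨K₀ - K, α, hα, ?_, fun u => ?_⟩
    · have : (⇑(K₀ - K) : V → _) = ⇑K₀ - ⇑K := by ext x; simp
      rw [this]
      exact hK₀.sub hK
    · have : A + K + (K₀ - K) = A + K₀ := by abel
      rw [this]
      exact hco u
end

section
/- On V = ℓ²(ℕ) over ℝ, the form a(u,v) = Σ_{n≥0} (−1)ⁿ uₙ vₙ is continuous, its associated operator 𝒜 : V → V' is invertible, but a is not essentially coercive: the sequence f_n = e_{2n} + e_{2n+1} converges weakly to 0, satisfies a(f_n, f_n) = 0 for all n, yet ‖f_n‖ = √2 does not tend to 0. -/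
open Filter

noncomputable section Stmt12Aux

private lemma stmt12_htwo : (0 : ℝ) < (2 : ENNReal).toReal := by norm_num

private lemma stmt12_memT (u : lp (fun _ : ℕ => ℝ) 2) :
    Memℓp (fun n => (-1 : ℝ) ^ n * u n) 2 := by
  apply memℓp_gen
  have h := ((memℓp_gen_iff stmt12_htwo).mp (lp.memℓp u))
  convert h using 2 with n
  simp [abs_mul]

/-- Sign-flip map on ℓ². -/
private def stmt12T (u : lp (fun _ : ℕ => ℝ) 2) : lp (fun _ : ℕ => ℝ) 2 :=
  ⟨fun n => (-1 : ℝ) ^ n * u n, stmt12_memT u⟩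

private lemma stmt12T_apply (u : lp (fun _ : ℕ => ℝ) 2) (n : ℕ) :
    stmt12T u n = (-1 : ℝ) ^ n * u n := rfl

private lemma stmt12T_T (u : lp (fun _ : ℕ => ℝ) 2) : stmt12T (stmt12T u) = u := by
  apply lp.ext
  funext n
  show (-1 : ℝ) ^ n * ((-1 : ℝ) ^ n * u n) = u n
  rw [← mul_assoc, ← mul_pow]
  norm_num

private lemma stmt12_norm_T (u : lp (fun _ : ℕ => ℝ) 2) : ‖stmt12T u‖ = ‖u‖ := by
  rw [lp.norm_eq_tsum_rpow stmt12_htwo, lp.norm_eq_tsum_rpow stmt12_htwo]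
  congr 2
  funext n
  show ‖(-1 : ℝ) ^ n * u n‖ ^ (2 : ENNReal).toReal = _
  simp [abs_mul]

private lemma stmt12_a_eq_inner (u v : lp (fun _ : ℕ => ℝ) 2) :
    (∑' n : ℕ, (-1 : ℝ) ^ n * u n * v n) = inner (𝕜 := ℝ) (stmt12T u) v := by
  rw [lp.inner_eq_tsum]
  exact tsum_congr fun n => by simp [stmt12T_apply, RCLike.inner_apply, mul_assoc]; ring

end Stmt12Aux

/-- on `V = ℓ²(ℕ)` over `ℝ`, the form `a(u,v) = Σ (−1)ⁿ uₙvₙ` is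
continuous and its associated operator is invertible, but `a` is not essentially
coercive: `fₙ = e_{2n} + e_{2n+1}` tends weakly to `0`, `a(fₙ,fₙ) = 0`, yet
`‖fₙ‖ = √2`. -/
theorem stmt12 :
    letI V := lp (fun _ : ℕ => ℝ) 2
    letI a : V → V → ℝ := fun u v => ∑' n : ℕ, (-1 : ℝ) ^ n * u n * v n
    letI f : ℕ → V := fun n =>
      lp.single 2 (2 * n) (1 : ℝ) + lp.single 2 (2 * n + 1) (1 : ℝ)
    (∀ u v : V, |a u v| ≤ ‖u‖ * ‖v‖) ∧
    (∀ L : StrongDual ℝ V, ∃! u : V, ∀ v : V, a u v = L v) ∧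
    (∀ L : StrongDual ℝ V, Tendsto (fun n => L (f n)) atTop (nhds 0)) ∧
    (∀ n : ℕ, a (f n) (f n) = 0) ∧
    (∀ n : ℕ, ‖f n‖ = Real.sqrt 2) ∧
    ¬ Tendsto (fun n => ‖f n‖) atTop (nhds 0) := by
  set V := lp (fun _ : ℕ => ℝ) 2 with hV
  -- coordinates of f n
  have hfn : ∀ (n k : ℕ),
      (lp.single 2 (2 * n) (1 : ℝ) + lp.single 2 (2 * n + 1) (1 : ℝ) : V) k
        = (lp.single 2 (2 * n) (1 : ℝ) : V) k + (lp.single 2 (2 * n + 1) (1 : ℝ) : V) k := by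
    intro n k
    rw [lp.coeFn_add]
    rfl
  have hf1 : ∀ n : ℕ,
      (lp.single 2 (2 * n) (1 : ℝ) + lp.single 2 (2 * n + 1) (1 : ℝ) : V) (2 * n) = 1 := by
    intro n
    rw [hfn, lp.single_apply_self, lp.single_apply_ne 2 _ _ (by omega)]
    norm_num
  have hf2 : ∀ n : ℕ,
      (lp.single 2 (2 * n) (1 : ℝ) + lp.single 2 (2 * n + 1) (1 : ℝ) : V) (2 * n + 1) = 1 := by
    intro n
    rw [hfn, lp.single_apply_self, lp.single_apply_ne 2 _ _ (by omega)]
    norm_num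
  have hinner : ∀ n : ℕ,
      inner (𝕜 := ℝ)
        (lp.single 2 (2 * n) (1 : ℝ) + lp.single 2 (2 * n + 1) (1 : ℝ) : V)
        (lp.single 2 (2 * n) (1 : ℝ) + lp.single 2 (2 * n + 1) (1 : ℝ) : V) = 2 := by
    intro n
    rw [inner_add_left, lp.inner_single_left, lp.inner_single_left, hf1, hf2]
    norm_num [RCLike.inner_apply]
  have hnorm : ∀ n : ℕ,
      ‖(lp.single 2 (2 * n) (1 : ℝ) + lp.single 2 (2 * n + 1) (1 : ℝ) : V)‖ = Real.sqrt 2 := by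
    intro n
    rw [norm_eq_sqrt_real_inner, hinner]
  refine ⟨?_, ?_, ?_, ?_, ?_, ?_⟩
  · -- continuity bound
    intro u v
    show |∑' n : ℕ, (-1 : ℝ) ^ n * u n * v n| ≤ ‖u‖ * ‖v‖
    rw [stmt12_a_eq_inner]
    calc |inner (𝕜 := ℝ) (stmt12T u) v| ≤ ‖stmt12T u‖ * ‖v‖ := abs_real_inner_le_norm _ _
      _ = ‖u‖ * ‖v‖ := by rw [stmt12_norm_T]
  · -- invertibility
    intro L
    set w := (InnerProductSpace.toDual ℝ V).symm L with hw
    have hLw : ∀ v : V, inner (𝕜 := ℝ) w v = L v := fun v =>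
      InnerProductSpace.toDual_symm_apply
    refine ⟨stmt12T w, ?_, ?_⟩
    · intro v
      show (∑' n : ℕ, (-1 : ℝ) ^ n * (stmt12T w) n * v n) = L v
      rw [stmt12_a_eq_inner, stmt12T_T, hLw]
    · intro u hu
      have : ∀ v : V, inner (𝕜 := ℝ) (stmt12T u) v = inner (𝕜 := ℝ) w v := by
        intro v
        rw [← stmt12_a_eq_inner]
        exact (hu v).trans (hLw v).symm
      have h2 : stmt12T u = w := ext_inner_right ℝ this
      have := congrArg stmt12T h2
      rwa [stmt12T_T] at this
  · -- weak convergence to 0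
    intro L
    set w := (InnerProductSpace.toDual ℝ V).symm L with hw
    have hLw : ∀ v : V, L v = inner (𝕜 := ℝ) w v := fun v =>
      (InnerProductSpace.toDual_symm_apply).symm
    have hsum : Summable fun k => ‖w k‖ ^ (2 : ENNReal).toReal :=
      (memℓp_gen_iff stmt12_htwo).mp (lp.memℓp w)
    have hw0 : Tendsto (fun k => w k) atTop (nhds 0) := by
      have h1 : Tendsto (fun k => ‖w k‖ ^ (2 : ENNReal).toReal) atTop (nhds 0) :=
        hsum.tendsto_atTop_zero
      have h2 : Tendsto (fun k => ‖w k‖) atTop (nhds 0) := by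
        have h3 := h1.sqrt
        rw [Real.sqrt_zero] at h3
        convert h3 using 2 with k
        rw [show ((2 : ENNReal).toReal) = (2 : ℝ) by norm_num, Real.rpow_two,
          Real.sqrt_sq (norm_nonneg _)]
      exact tendsto_zero_iff_norm_tendsto_zero.mpr h2
    have heven : Tendsto (fun n : ℕ => w (2 * n)) atTop (nhds 0) :=
      hw0.comp (tendsto_atTop_mono (fun n => show id n ≤ 2 * n by simp only [id_eq]; omega)
        tendsto_id)
    have hodd : Tendsto (fun n : ℕ => w (2 * n + 1)) atTop (nhds 0) :=
      hw0.comp (tendsto_atTop_mono (fun n => show id n ≤ 2 * n + 1 by simp only [id_eq]; omega)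
        tendsto_id)
    have key : ∀ n : ℕ,
        L (lp.single 2 (2 * n) (1 : ℝ) + lp.single 2 (2 * n + 1) (1 : ℝ) : V)
          = w (2 * n) + w (2 * n + 1) := by
      intro n
      rw [hLw, inner_add_right, lp.inner_single_right, lp.inner_single_right]
      simp [RCLike.inner_apply]
    simp only [key]
    simpa using heven.add hodd
  · -- a (f n) (f n) = 0
    intro n
    show (∑' k : ℕ, (-1 : ℝ) ^ k * _ * _) = 0
    rw [stmt12_a_eq_inner]
    have hT : stmt12T (lp.single 2 (2 * n) (1 : ℝ) + lp.single 2 (2 * n + 1) (1 : ℝ) : V)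
        = lp.single 2 (2 * n) (1 : ℝ) - lp.single 2 (2 * n + 1) (1 : ℝ) := by
      apply lp.ext
      funext k
      rw [lp.coeFn_sub]
      show (-1 : ℝ) ^ k *
        (lp.single 2 (2 * n) (1 : ℝ) + lp.single 2 (2 * n + 1) (1 : ℝ) : V) k = _
      rw [hfn, Pi.sub_apply]
      by_cases h1 : k = 2 * n
      · subst h1
        have r1 : (lp.single 2 (2 * n) (1 : ℝ) : V) (2 * n) = 1 := lp.single_apply_self 2 _ _
        have r2 : (lp.single 2 (2 * n + 1) (1 : ℝ) : V) (2 * n) = 0 :=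
          lp.single_apply_ne 2 _ _ (by omega)
        rw [r1, r2]
        simp [pow_mul]
      · by_cases h2 : k = 2 * n + 1
        · subst h2
          have r1 : (lp.single 2 (2 * n) (1 : ℝ) : V) (2 * n + 1) = 0 :=
            lp.single_apply_ne 2 _ _ (by omega)
          have r2 : (lp.single 2 (2 * n + 1) (1 : ℝ) : V) (2 * n + 1) = 1 :=
            lp.single_apply_self 2 _ _
          rw [r1, r2]
          simp [pow_succ, pow_mul]
        · have r1 : (lp.single 2 (2 * n) (1 : ℝ) : V) k = 0 := lp.single_apply_ne 2 _ _ h1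
          have r2 : (lp.single 2 (2 * n + 1) (1 : ℝ) : V) k = 0 := lp.single_apply_ne 2 _ _ h2
          rw [r1, r2]
          simp
    rw [hT, inner_sub_left, lp.inner_single_left, lp.inner_single_left, hf1 n, hf2 n]
    norm_num [RCLike.inner_apply]
  · -- norms
    exact hnorm
  · -- not tending to 0
    intro hcontra
    simp only [hnorm] at hcontra
    have : Real.sqrt 2 = 0 := tendsto_nhds_unique tendsto_const_nhds hcontra
    have h2 : (0 : ℝ) < Real.sqrt 2 := Real.sqrt_pos.mpr (by norm_num)
    linarith
end

section
/- Let V be a separable Hilbert space and a : V × V → 𝕂 a continuous sesquilinear form that is essentially coercive and satisfies uniqueness (a(u,v) = 0 for all v implies u = 0). Then for every approximating sequence (V_n) of V there exist n₀ ∈ ℕ and β > 0 such that sup_{v ∈ V_n, ‖v‖=1} |a(u,v)| ≥ β‖u‖ for all u ∈ V_n and all n ≥ n₀. -/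
open Metric Filter
open scoped InnerProductSpace

lemma aux_weak_compact {𝕜 : Type*} [RCLike 𝕜] {V : Type*} [NormedAddCommGroup V]
    [InnerProductSpace 𝕜 V] [CompleteSpace V] [TopologicalSpace.SeparableSpace V]
    (u : ℕ → V) (hu : ∀ k, ‖u k‖ ≤ 1) :
    ∃ (φ : ℕ → ℕ) (u₀ : V), StrictMono φ ∧
      ∀ f : StrongDual 𝕜 V, Tendsto (fun k => f (u (φ k))) atTop (nhds (f u₀)) := by
  obtain ⟨e, he⟩ := TopologicalSpace.exists_dense_seq V
  have hsc : IsCompact (Set.univ.pi fun i => Metric.closedBall (0:𝕜) (‖e i‖)) :=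
    isCompact_univ_pi fun i => isCompact_closedBall _ _
  have hmem : ∀ k, (fun i => ⟪u k, e i⟫_𝕜) ∈ (Set.univ.pi fun i => Metric.closedBall (0:𝕜) (‖e i‖)) := by
    intro k
    rw [Set.mem_univ_pi]
    intro i
    rw [Metric.mem_closedBall, dist_zero_right]
    calc ‖⟪u k, e i⟫_𝕜‖ ≤ ‖u k‖ * ‖e i‖ := norm_inner_le_norm _ _
      _ ≤ 1 * ‖e i‖ := by gcongr; exact hu k
      _ = ‖e i‖ := one_mul _
  obtain ⟨L, -, φ, hφ, hconv⟩ := hsc.tendsto_subseq hmem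
  rw [tendsto_pi_nhds] at hconv
  have hconv' : ∀ i, Tendsto (fun k => ⟪u (φ k), e i⟫_𝕜) atTop (nhds (L i)) := by
    intro i; exact hconv i
  have key : ∀ v : V, CauchySeq fun k => ⟪u (φ k), v⟫_𝕜 := by
    intro v
    rw [Metric.cauchySeq_iff]
    intro ε hε
    obtain ⟨i, hi⟩ := he.exists_dist_lt v (show (0:ℝ) < ε/3 by linarith)
    have hc : CauchySeq fun k => ⟪u (φ k), e i⟫_𝕜 := (hconv' i).cauchySeq
    rw [Metric.cauchySeq_iff] at hc
    obtain ⟨N, hN⟩ := hc (ε/3) (by linarith)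
    refine ⟨N, fun m hm l hl => ?_⟩
    have b1 : ∀ j, ‖⟪u (φ j), v - e i⟫_𝕜‖ ≤ ε/3 := by
      intro j
      calc ‖⟪u (φ j), v - e i⟫_𝕜‖ ≤ ‖u (φ j)‖ * ‖v - e i‖ := norm_inner_le_norm _ _
        _ ≤ 1 * (ε/3) := by
            refine mul_le_mul (hu _) ?_ (norm_nonneg _) zero_le_one
            rw [← dist_eq_norm]; exact hi.le
        _ = ε/3 := one_mul _
    have hdist := hN m hm l hl
    rw [dist_eq_norm] at hdist ⊢
    have hsplit : ⟪u (φ m), v⟫_𝕜 - ⟪u (φ l), v⟫_𝕜 =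
        (⟪u (φ m), v - e i⟫_𝕜 - ⟪u (φ l), v - e i⟫_𝕜) +
          (⟪u (φ m), e i⟫_𝕜 - ⟪u (φ l), e i⟫_𝕜) := by
      simp only [inner_sub_right]; ring
    rw [hsplit]
    calc ‖(⟪u (φ m), v - e i⟫_𝕜 - ⟪u (φ l), v - e i⟫_𝕜) +
          (⟪u (φ m), e i⟫_𝕜 - ⟪u (φ l), e i⟫_𝕜)‖
        ≤ ‖⟪u (φ m), v - e i⟫_𝕜 - ⟪u (φ l), v - e i⟫_𝕜‖ +
            ‖⟪u (φ m), e i⟫_𝕜 - ⟪u (φ l), e i⟫_𝕜‖ := norm_add_le _ _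
      _ ≤ (‖⟪u (φ m), v - e i⟫_𝕜‖ + ‖⟪u (φ l), v - e i⟫_𝕜‖) +
            ‖⟪u (φ m), e i⟫_𝕜 - ⟪u (φ l), e i⟫_𝕜‖ := by gcongr; exact norm_sub_le _ _
      _ < (ε/3 + ε/3) + ε/3 := by
          have := b1 m; have := b1 l
          apply add_lt_add_of_le_of_lt (by linarith) hdist
      _ = ε := by ring
  have hlim : ∀ v : V, ∃ l, Tendsto (fun k => ⟪u (φ k), v⟫_𝕜) atTop (nhds l) :=
    fun v => cauchySeq_tendsto_of_complete (key v)
  choose b hb using hlim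
  have hadd : ∀ x y, b (x + y) = b x + b y := fun x y =>
    tendsto_nhds_unique (hb (x + y)) (by simpa [inner_add_right] using (hb x).add (hb y))
  have hsmul : ∀ (c : 𝕜) (x : V), b (c • x) = c * b x := fun c x =>
    tendsto_nhds_unique (hb (c • x)) (by simpa [inner_smul_right] using (hb x).const_mul c)
  have hbd : ∀ x : V, ‖b x‖ ≤ 1 * ‖x‖ := by
    intro x
    refine le_of_tendsto (hb x).norm (Filter.Eventually.of_forall fun k => ?_)
    calc ‖⟪u (φ k), x⟫_𝕜‖ ≤ ‖u (φ k)‖ * ‖x‖ := norm_inner_le_norm _ _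
      _ ≤ 1 * ‖x‖ := by gcongr; exact hu _
  let F : V →ₗ[𝕜] 𝕜 :=
    { toFun := b
      map_add' := hadd
      map_smul' := fun c x => by simpa using hsmul c x }
  let f : V →L[𝕜] 𝕜 := LinearMap.mkContinuous F 1 hbd
  let u₀ : V := (InnerProductSpace.toDual 𝕜 V).symm f
  have hu₀ : ∀ v : V, ⟪u₀, v⟫_𝕜 = b v := by
    intro v
    have : (InnerProductSpace.toDual 𝕜 V) u₀ v = f v := by
      rw [LinearIsometryEquiv.apply_symm_apply]
    exact (by simpa [InnerProductSpace.toDual_apply_apply] using this : ⟪u₀, v⟫_𝕜 = f v)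
  refine ⟨φ, u₀, hφ, ?_⟩
  intro g
  obtain ⟨w, rfl⟩ := (InnerProductSpace.toDual 𝕜 V).surjective g
  simp only [InnerProductSpace.toDual_apply_apply]
  have h1 : Tendsto (fun k => ⟪w, u (φ k)⟫_𝕜) atTop (nhds (starRingEnd 𝕜 (b w))) := by
    have := ((RCLike.continuous_conj (K := 𝕜)).tendsto (b w)).comp (hb w)
    have heq : (⇑(starRingEnd 𝕜) ∘ fun k => ⟪u (φ k), w⟫_𝕜) = fun k => ⟪w, u (φ k)⟫_𝕜 := by
      funext k; exact inner_conj_symm _ _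
    rwa [heq] at this
  rw [show ⟪w, u₀⟫_𝕜 = starRingEnd 𝕜 (b w) by rw [← inner_conj_symm, hu₀]]
  exact h1


/-- an essentially coercive continuous form satisfying uniqueness
satisfies the uniform inf-sup condition, eventually, along any approximating
sequence of finite-dimensional subspaces. -/
theorem stmt13 {𝕜 : Type*} [RCLike 𝕜]
    {V : Type*} [NormedAddCommGroup V] [InnerProductSpace 𝕜 V] [CompleteSpace V]
    [TopologicalSpace.SeparableSpace V]
    (a : V →L[𝕜] V →L[𝕜] 𝕜) (M : ℝ)
    (hbound : ∀ u v, ‖a u v‖ ≤ M * ‖u‖ * ‖v‖)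
    (hess : ∀ u : ℕ → V,
        (∀ f : StrongDual 𝕜 V, Tendsto (fun n => f (u n)) atTop (nhds 0)) →
        Tendsto (fun n => a (u n) (u n)) atTop (nhds 0) →
        Tendsto (fun n => ‖u n‖) atTop (nhds 0))
    (huniq : ∀ u : V, (∀ v : V, a u v = 0) → u = 0)
    (Vn : ℕ → Subspace 𝕜 V)
    (hfin : ∀ n, FiniteDimensional 𝕜 (Vn n))
    (happrox : ∀ v : V, Tendsto (fun n => infDist v (Vn n : Set V)) atTop (nhds 0)) :
    ∃ (n₀ : ℕ) (β : ℝ), 0 < β ∧ ∀ n ≥ n₀, ∀ u ∈ Vn n,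
      β * ‖u‖ ≤ sSup {c : ℝ | ∃ v ∈ Vn n, ‖v‖ = 1 ∧ c = ‖a u v‖} := by
  by_contra hcon
  push_neg at hcon
  have hsel : ∀ k : ℕ, ∃ n, k ≤ n ∧ ∃ u, u ∈ Vn n ∧
      sSup {c : ℝ | ∃ v ∈ Vn n, ‖v‖ = 1 ∧ c = ‖a u v‖} < (1/((k:ℝ)+1)) * ‖u‖ := by
    intro k
    obtain ⟨n, hn, u, hu, hlt⟩ := hcon k (1/((k:ℝ)+1)) (by positivity)
    exact ⟨n, hn, u, hu, hlt⟩
  choose n hn u' hu' hlt using hsel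
  -- the sups are nonneg, so u' k ≠ 0
  have hsupnn : ∀ k, (0:ℝ) ≤ sSup {c : ℝ | ∃ v ∈ Vn (n k), ‖v‖ = 1 ∧ c = ‖a (u' k) v‖} := by
    intro k
    refine Real.sSup_nonneg ?_
    rintro c ⟨v, -, -, rfl⟩
    exact norm_nonneg _
  have hupos : ∀ k, (0:ℝ) < ‖u' k‖ := by
    intro k
    rcases (norm_nonneg (u' k)).lt_or_eq with h | h
    · exact h
    · exfalso
      have hlt' := hlt k
      rw [← h, mul_zero] at hlt'
      exact absurd hlt' (not_lt.2 (hsupnn k))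
  set w : ℕ → V := fun k => ((‖u' k‖ : 𝕜))⁻¹ • u' k with hw
  have hwnorm : ∀ k, ‖w k‖ = 1 := by
    intro k
    rw [hw]
    simp only [norm_smul, norm_inv, RCLike.norm_ofReal, abs_of_nonneg (norm_nonneg (u' k))]
    exact inv_mul_cancel₀ (hupos k).ne'
  have hwmem : ∀ k, w k ∈ Vn (n k) := fun k => Submodule.smul_mem _ _ (hu' k)
  -- key smallness bound
  have hkey : ∀ k, ∀ v ∈ Vn (n k), ‖a (w k) v‖ ≤ (1/((k:ℝ)+1)) * ‖v‖ := by
    intro k v hv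
    rcases eq_or_ne v 0 with rfl | hvne
    · simp
    have hvpos : (0:ℝ) < ‖v‖ := norm_pos_iff.2 hvne
    set vv : V := ((‖v‖ : 𝕜))⁻¹ • v with hvv
    have hvvmem : vv ∈ Vn (n k) := Submodule.smul_mem _ _ hv
    have hvvnorm : ‖vv‖ = 1 := by
      rw [hvv]
      simp only [norm_smul, norm_inv, RCLike.norm_ofReal, abs_of_nonneg (norm_nonneg v)]
      exact inv_mul_cancel₀ hvpos.ne'
    have hbdd : BddAbove {c : ℝ | ∃ x ∈ Vn (n k), ‖x‖ = 1 ∧ c = ‖a (u' k) x‖} := by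
      refine ⟨‖a (u' k)‖, ?_⟩
      rintro c ⟨x, -, hx1, rfl⟩
      calc ‖a (u' k) x‖ ≤ ‖a (u' k)‖ * ‖x‖ := (a (u' k)).le_opNorm x
        _ = ‖a (u' k)‖ := by rw [hx1, mul_one]
    have hel : ‖a (u' k) vv‖ ≤ sSup {c : ℝ | ∃ x ∈ Vn (n k), ‖x‖ = 1 ∧ c = ‖a (u' k) x‖} :=
      le_csSup hbdd ⟨vv, hvvmem, hvvnorm, rfl⟩
    have hsmall : ‖a (u' k) vv‖ ≤ (1/((k:ℝ)+1)) * ‖u' k‖ := hel.trans (hlt k).le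
    have hrw1 : ‖a (u' k) v‖ = ‖v‖ * ‖a (u' k) vv‖ := by
      have : v = ((‖v‖ : 𝕜)) • vv := by
        rw [hvv, smul_inv_smul₀]
        exact_mod_cast RCLike.ofReal_ne_zero.2 hvpos.ne'
      conv_lhs => rw [this]
      rw [map_smul]
      simp [norm_smul, RCLike.norm_ofReal, abs_of_nonneg (norm_nonneg v)]
    have hrw2 : ‖a (w k) v‖ = ‖u' k‖⁻¹ * ‖a (u' k) v‖ := by
      rw [hw]
      simp only [map_smul, ContinuousLinearMap.smul_apply, norm_smul, norm_inv,
        RCLike.norm_ofReal, abs_of_nonneg (norm_nonneg (u' k))]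
    rw [hrw2, hrw1]
    calc ‖u' k‖⁻¹ * (‖v‖ * ‖a (u' k) vv‖)
        ≤ ‖u' k‖⁻¹ * (‖v‖ * ((1/((k:ℝ)+1)) * ‖u' k‖)) := by
          gcongr
      _ = (1/((k:ℝ)+1)) * ‖v‖ := by
          rw [show ‖v‖ * ((1/((k:ℝ)+1)) * ‖u' k‖) = ‖u' k‖ * ((1/((k:ℝ)+1)) * ‖v‖) by ring,
            ← mul_assoc, inv_mul_cancel₀ (hupos k).ne', one_mul]
  -- weak subsequence
  obtain ⟨φ, u₀, hφ, hweak⟩ := aux_weak_compact (𝕜 := 𝕜) w (fun k => (hwnorm k).le)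
  have hφk : ∀ k, k ≤ φ k := fun k => hφ.le_apply
  have hnφ : Tendsto (fun k => n (φ k)) atTop atTop :=
    tendsto_atTop_mono (fun k => (hφk k).trans (hn (φ k))) tendsto_id
  have hone : Tendsto (fun k : ℕ => 1/((φ k : ℝ)+1)) atTop (nhds 0) := by
    refine squeeze_zero (fun k => by positivity) (fun k => ?_)
      tendsto_one_div_add_atTop_nhds_zero_nat
    apply one_div_le_one_div_of_le (by positivity)
    have h2 : ((k:ℝ)) ≤ (φ k : ℝ) := Nat.cast_le.2 (hφk k)
    linarith
  -- u₀ = 0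
  have hu₀ : u₀ = 0 := by
    apply huniq
    intro v
    -- approximants of v
    have hex : ∀ m : ℕ, ∃ p ∈ Vn m, dist v p < infDist v (Vn m : Set V) + 1/((m:ℝ)+1) := by
      intro m
      have hne : ((Vn m : Set V)).Nonempty := ⟨0, Submodule.zero_mem _⟩
      refine (Metric.infDist_lt_iff hne).1 ?_
      have : (0:ℝ) < 1/((m:ℝ)+1) := by positivity
      linarith
    choose p hp hpd using hex
    have hpt : Tendsto (fun m => dist v (p m)) atTop (nhds 0) := by
      refine squeeze_zero (fun m => dist_nonneg) (fun m => (hpd m).le) ?_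
      have := (happrox v).add tendsto_one_div_add_atTop_nhds_zero_nat
      simpa using this
    set q : ℕ → V := fun k => p (n (φ k)) with hq
    have hqd : Tendsto (fun k => dist v (q k)) atTop (nhds 0) := hpt.comp hnφ
    have h3 : Tendsto (fun k => a (w (φ k)) v) atTop (nhds (a u₀ v)) := by
      have := hweak (a.flip v)
      simpa using this
    have h4 : Tendsto (fun k => a (w (φ k)) v) atTop (nhds 0) := by
      rw [tendsto_zero_iff_norm_tendsto_zero]
      have hb : ∀ k, ‖a (w (φ k)) v‖ ≤
          ‖a‖ * dist v (q k) + (1/((φ k : ℝ)+1)) * (‖v‖ + dist v (q k)) := by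
        intro k
        have hv_eq : v = (v - q k) + q k := by abel
        have hsplit : a (w (φ k)) v = a (w (φ k)) (v - q k) + a (w (φ k)) (q k) := by
          conv_lhs => rw [hv_eq]
          rw [map_add]
        rw [hsplit]
        have t1 : ‖a (w (φ k)) (v - q k)‖ ≤ ‖a‖ * dist v (q k) := by
          calc ‖a (w (φ k)) (v - q k)‖ ≤ ‖a (w (φ k))‖ * ‖v - q k‖ :=
                (a (w (φ k))).le_opNorm _
            _ ≤ (‖a‖ * ‖w (φ k)‖) * ‖v - q k‖ := by gcongr; exact a.le_opNorm _
            _ = ‖a‖ * dist v (q k) := by rw [hwnorm, mul_one, dist_eq_norm]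
        have t2 : ‖a (w (φ k)) (q k)‖ ≤ (1/((φ k : ℝ)+1)) * (‖v‖ + dist v (q k)) := by
          refine (hkey (φ k) (q k) (hp _)).trans ?_
          gcongr
          calc ‖q k‖ = ‖v - (v - q k)‖ := by congr 1; abel
            _ ≤ ‖v‖ + ‖v - q k‖ := norm_sub_le _ _
            _ = ‖v‖ + dist v (q k) := by rw [dist_eq_norm]
        calc ‖a (w (φ k)) (v - q k) + a (w (φ k)) (q k)‖
            ≤ ‖a (w (φ k)) (v - q k)‖ + ‖a (w (φ k)) (q k)‖ := norm_add_le _ _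
          _ ≤ ‖a‖ * dist v (q k) + (1/((φ k : ℝ)+1)) * (‖v‖ + dist v (q k)) := by
              exact add_le_add t1 t2
      refine squeeze_zero (fun k => norm_nonneg _) hb ?_
      have := ((tendsto_const_nhds (x := ‖a‖)).mul hqd).add
        (hone.mul ((tendsto_const_nhds (x := ‖v‖)).add hqd))
      simpa using this
    exact tendsto_nhds_unique h3 h4
  -- apply essential coercivity to get contradiction
  have hcoerc := hess (fun k => w (φ k))
    (by
      intro f
      have := hweak f
      rwa [hu₀, map_zero] at this)
    (by
      rw [tendsto_zero_iff_norm_tendsto_zero]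
      refine squeeze_zero (fun k => norm_nonneg _) (fun k => ?_) hone
      have := hkey (φ k) (w (φ k)) (hwmem (φ k))
      rwa [hwnorm, mul_one] at this)
  have h1 : Tendsto (fun k => ‖w (φ k)‖) atTop (nhds 1) := by
    simp only [hwnorm]
    exact tendsto_const_nhds
  exact one_ne_zero (tendsto_nhds_unique h1 hcoerc)
end

section
/- Let V ↪ H ↪ V' be a Gelfand triple of separable Hilbert spaces, X ↪ V' a Banach space continuously embedded in V', a : V × V → 𝕂 a continuous form bounded by M satisfying the uniform inf-sup condition with constant β on an approximating sequence (V_n), and 𝒜 : V → V' its invertible associated operator. Define γ_n(X) = sup_{f ∈ X, ‖f‖_X = 1} dist(𝒜⁻¹f, V_n) and γ_n*(H) similarly for the adjoint form. Then for every L ∈ X, the solution u of a(u,·) = L and the Galerkin solutions u_n ∈ V_n satisfy ‖u − u_n‖_H ≤ (M²/β) · γ_n(X) · γ_n*(H) · ‖L‖_X. -/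
open Metric Filter

lemma quad_ineq (a b c C : ℝ) (ha : 0 ≤ a) (hb : 0 ≤ b) (hC : 1 ≤ C)
    (hf : ∀ t : ℝ, t ^ 2 * a ^ 2 ≤ C ^ 2 * (b ^ 2 - 2 * t * c + t ^ 2 * a ^ 2)) :
    b ^ 2 ≤ C ^ 2 * (a ^ 2 + 2 * c + b ^ 2) := by
  have hC0 : 0 < C := lt_of_lt_of_le one_pos hC
  set D : ℝ := Real.sqrt (C ^ 2 - 1) with hDdef
  have hD0 : 0 ≤ D := Real.sqrt_nonneg _
  have hD2 : D ^ 2 = C ^ 2 - 1 := Real.sq_sqrt (by nlinarith)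
  have h3 : ∀ t : ℝ, D ^ 2 * a ^ 2 * (t * t) = (C ^ 2 - 1) * (a ^ 2 * (t * t)) := by
    intro t; rw [hD2]; ring
  have hf' : ∀ t : ℝ, 0 ≤ D ^ 2 * a ^ 2 * (t * t) + -(2 * C ^ 2 * c) * t + C ^ 2 * b ^ 2 := by
    intro t
    have h1 := hf t
    have h2 := h3 t
    nlinarith [h1, h2, sq_abs t]
  have hdisc := discrim_le_zero hf'
  rw [discrim] at hdisc
  have hcc : (C * c) ^ 2 ≤ (D * a * b) ^ 2 := by nlinarith [hdisc, sq_nonneg C, hC0]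
  have key : -(D * a * b) ≤ C * c := by
    have hDab : 0 ≤ D * a * b := by positivity
    nlinarith [hcc, hDab, sq_nonneg (C * c + D * a * b)]
  nlinarith [sq_nonneg (C * a - D * b), key, hD2, hC0]

/-- Kato/Xu–Zikatanov style geometric lemma in an inner product space. -/
lemma cea_aux {𝕜 E : Type*} [RCLike 𝕜] [NormedAddCommGroup E] [InnerProductSpace 𝕜 E]
    (C : ℝ) (hC : 1 ≤ C) (A B : E)
    (hyp : ∀ t : ℝ, ‖(t : 𝕜) • A‖ ≤ C * ‖B - (t : 𝕜) • A‖) :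
    ‖B‖ ≤ C * ‖A + B‖ := by
  have hC0 : 0 < C := lt_of_lt_of_le one_pos hC
  set c : ℝ := RCLike.re (inner (𝕜 := 𝕜) A B) with hc
  have hsub : ∀ t : ℝ, ‖B - (t : 𝕜) • A‖ ^ 2 = ‖B‖ ^ 2 - 2 * t * c + t ^ 2 * ‖A‖ ^ 2 := by
    intro t
    rw [norm_sub_sq (𝕜 := 𝕜)]
    have : inner (𝕜 := 𝕜) B ((t : 𝕜) • A) = (t : 𝕜) * inner 𝕜 B A := inner_smul_right _ _ _
    rw [this]
    rw [norm_smul]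
    have hre : RCLike.re ((t : 𝕜) * inner (𝕜 := 𝕜) B A) = t * RCLike.re (inner (𝕜 := 𝕜) B A) :=
      RCLike.re_ofReal_mul _ _
    rw [hre]
    have : RCLike.re (inner (𝕜 := 𝕜) B A) = c := by
      rw [hc, ← inner_conj_symm A B, RCLike.conj_re]
    rw [this]
    have hnt : ‖(t : 𝕜)‖ = |t| := by simp [RCLike.norm_ofReal]
    rw [hnt, mul_pow, sq_abs]
    ring
  have hadd : ‖A + B‖ ^ 2 = ‖A‖ ^ 2 + 2 * c + ‖B‖ ^ 2 := by
    rw [norm_add_sq (𝕜 := 𝕜)]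
  have hq : ‖B‖ ^ 2 ≤ C ^ 2 * (‖A‖ ^ 2 + 2 * c + ‖B‖ ^ 2) := by
    apply quad_ineq _ _ _ _ (norm_nonneg A) (norm_nonneg B) hC
    intro t
    have h1 := hyp t
    have h2 : ‖(t : 𝕜) • A‖ ^ 2 ≤ (C * ‖B - (t : 𝕜) • A‖) ^ 2 :=
      pow_le_pow_left₀ (norm_nonneg _) h1 2
    have h3 : ‖(t : 𝕜) • A‖ ^ 2 = t ^ 2 * ‖A‖ ^ 2 := by
      rw [norm_smul]
      have hnt : ‖(t : 𝕜)‖ = |t| := by simp [RCLike.norm_ofReal]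
      rw [hnt, mul_pow, sq_abs]
    rw [h3, mul_pow, hsub t] at h2
    linarith
  rw [← hadd] at hq
  calc ‖B‖ = Real.sqrt (‖B‖ ^ 2) := (Real.sqrt_sq (norm_nonneg B)).symm
    _ ≤ Real.sqrt (C ^ 2 * ‖A + B‖ ^ 2) := Real.sqrt_le_sqrt hq
    _ = C * ‖A + B‖ := by
        rw [← mul_pow, Real.sqrt_sq (by positivity)]


set_option maxHeartbeats 2000000 in
/-- generalized Aubin–Nitsche: in a Gelfand triple `V ↪ H ↪ V'` with a
Banach space `X ↪ V'` of data, under the uniform inf-sup condition, the Galerkin error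
measured in `H` satisfies `‖u − uₙ‖_H ≤ (M²/β)·γₙ(X)·γₙ*(H)·‖L‖_X`. -/
theorem stmt15 {𝕜 : Type*} [RCLike 𝕜]
    {V H X : Type*}
    [NormedAddCommGroup V] [InnerProductSpace 𝕜 V] [CompleteSpace V]
    [TopologicalSpace.SeparableSpace V]
    [NormedAddCommGroup H] [InnerProductSpace 𝕜 H] [CompleteSpace H]
    [TopologicalSpace.SeparableSpace H]
    [NormedAddCommGroup X] [NormedSpace 𝕜 X]
    -- the Gelfand triple `V ↪ H ↪ V'`
    (i : V →L[𝕜] H) (hi : Function.Injective i) (hiDense : DenseRange i)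
    (j : H →L[𝕜] StrongDual 𝕜 V) (hjInj : Function.Injective j)
    (hj : ∀ (h : H) (v : V), j h v = inner 𝕜 h (i v))
    -- the continuous embedding `X ↪ V'`
    (e : X →L[𝕜] StrongDual 𝕜 V) (heInj : Function.Injective e)
    -- the form, its bound and the uniform inf-sup condition
    (a : V →L[𝕜] V →L[𝕜] 𝕜) (M β : ℝ) (hM : 0 < M) (hβ : 0 < β)
    (hbound : ∀ u v, ‖a u v‖ ≤ M * ‖u‖ * ‖v‖)
    (Vn : ℕ → Subspace 𝕜 V) (hfin : ∀ n, FiniteDimensional 𝕜 (Vn n))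
    (happrox : ∀ v : V, Tendsto (fun n => infDist v (Vn n : Set V)) atTop (nhds 0))
    (hBNB : ∀ n, ∀ u ∈ Vn n,
      β * ‖u‖ ≤ sSup {c : ℝ | ∃ v ∈ Vn n, ‖v‖ = 1 ∧ c = ‖a u v‖})
    -- the inverses of the associated operator `𝒜` and of its adjoint `𝒜*`
    (Ainv Astarinv : StrongDual 𝕜 V → V)
    (hAinv : ∀ f : StrongDual 𝕜 V, ∀ v : V, a (Ainv f) v = f v)
    (hAstarinv : ∀ f : StrongDual 𝕜 V, ∀ v : V,
      a v (Astarinv f) = starRingEnd 𝕜 (f v)) :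
    ∀ L : X, ∀ u : V, (∀ v : V, a u v = e L v) →
      ∀ n, ∀ un ∈ Vn n, (∀ χ ∈ Vn n, a un χ = e L χ) →
        ‖i u - i un‖ ≤ (M ^ 2 / β) *
          sSup {c : ℝ | ∃ g : X, ‖g‖ = 1 ∧ c = infDist (Ainv (e g)) (Vn n : Set V)} *
          sSup {c : ℝ | ∃ h : H, ‖h‖ = 1 ∧ c = infDist (Astarinv (j h)) (Vn n : Set V)} *
          ‖L‖ := by
  -- injectivity in each slot
  have hinj1 : ∀ z : V, (∀ v, a z v = 0) → z = 0 := by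
    intro z hz
    apply NormedSpace.eq_zero_of_forall_dual_eq_zero 𝕜
    intro f
    have h1 := hAstarinv f z
    rw [hz (Astarinv f)] at h1
    have : (starRingEnd 𝕜) (f z) = 0 := h1.symm
    simpa using this
  have hinj2 : ∀ z : V, (∀ v, a v z = 0) → z = 0 := by
    intro z hz
    apply NormedSpace.eq_zero_of_forall_dual_eq_zero 𝕜
    intro f
    have h1 := hAinv f z
    rw [hz (Ainv f)] at h1
    exact h1.symm
  have huniq1 : ∀ z z' : V, (∀ v, a z v = a z' v) → z = z' := by
    intro z z' hzz
    have : z - z' = 0 := by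
      apply hinj1
      intro v
      rw [map_sub, ContinuousLinearMap.sub_apply, hzz v, sub_self]
    exact sub_eq_zero.mp this
  have huniq2 : ∀ z z' : V, (∀ v, a v z = a v z') → z = z' := by
    intro z z' hzz
    have : z - z' = 0 := by
      apply hinj2
      intro v
      rw [map_sub, hzz v, sub_self]
    exact sub_eq_zero.mp this
  -- boundedness of `Ainv` via the open mapping theorem
  have hAinvB : ∃ C : ℝ, 0 ≤ C ∧ ∀ f, ‖Ainv f‖ ≤ C * ‖f‖ := by
    have hker : LinearMap.ker (a : V →ₗ[𝕜] StrongDual 𝕜 V) = ⊥ := by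
      rw [LinearMap.ker_eq_bot']
      intro z hz
      exact hinj1 z fun v => by rw [show a z = 0 from hz]; rfl
    have hrange : LinearMap.range (a : V →ₗ[𝕜] StrongDual 𝕜 V) = ⊤ := by
      rw [LinearMap.range_eq_top]
      intro f
      exact ⟨Ainv f, by ext v; exact hAinv f v⟩
    set Aeq : V ≃L[𝕜] StrongDual 𝕜 V := ContinuousLinearEquiv.ofBijective a hker hrange
      with hAeq
    have hAinv_eq : ∀ f, Ainv f = Aeq.symm f := by
      intro f
      have h1 : Aeq (Ainv f) = f := by
        ext v
        exact hAinv f v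
      have h2 := congrArg Aeq.symm h1
      simpa using h2
    refine ⟨‖(Aeq.symm : StrongDual 𝕜 V →L[𝕜] V)‖, ContinuousLinearMap.opNorm_nonneg _, fun f => ?_⟩
    rw [hAinv_eq f]
    exact (Aeq.symm : StrongDual 𝕜 V →L[𝕜] V).le_opNorm f
  obtain ⟨CE, hCE0, hAinv_bound⟩ := hAinvB
  -- the solution operator of the adjoint problem, `h ↦ Astarinv (j h)`, is linear
  have hTadd : ∀ h h' : H, Astarinv (j (h + h')) = Astarinv (j h) + Astarinv (j h') := by
    intro h h'
    apply huniq2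
    intro v
    rw [map_add, hAstarinv, map_add, hAstarinv, hAstarinv, ContinuousLinearMap.add_apply,
      map_add]
  have hTsmul : ∀ (m : 𝕜) (h : H), Astarinv (j (m • h)) = m • Astarinv (j h) := by
    intro m h
    apply huniq2
    intro v
    rw [hAstarinv, (a v).map_smul, hAstarinv, hj, hj, inner_smul_left]
    simp [smul_eq_mul, mul_comm]
  have hTB : ∃ C : ℝ, 0 ≤ C ∧ ∀ h : H, ‖Astarinv (j h)‖ ≤ C * ‖h‖ := by
    set Tlin : H →ₗ[𝕜] V :=
      { toFun := fun h => Astarinv (j h)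
        map_add' := hTadd
        map_smul' := hTsmul } with hTlin
    have hTcont : Continuous Tlin := by
      apply Tlin.continuous_of_seq_closed_graph
      intro seq x y hux huy
      apply huniq2
      intro v
      have h1 : Tendsto (fun k => a v (Tlin (seq k))) atTop (nhds (a v y)) :=
        ((a v).continuous.tendsto y).comp huy
      have h2 : ∀ k, a v (Tlin (seq k)) = (starRingEnd 𝕜) (inner 𝕜 (seq k) (i v)) := by
        intro k
        show a v (Astarinv (j (seq k))) = _
        rw [hAstarinv, hj]
      have h3 : Tendsto (fun k => (starRingEnd 𝕜) (inner (𝕜 := 𝕜) (seq k) (i v))) atTop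
          (nhds ((starRingEnd 𝕜) (inner (𝕜 := 𝕜) x (i v)))) :=
        (RCLike.continuous_conj.tendsto _).comp (hux.inner tendsto_const_nhds)
      rw [funext h2] at h1
      have h4 : a v y = (starRingEnd 𝕜) (inner (𝕜 := 𝕜) x (i v)) := tendsto_nhds_unique h1 h3
      rw [h4]
      show _ = a v (Astarinv (j x))
      rw [hAstarinv, hj]
    set Tc : H →L[𝕜] V := ⟨Tlin, hTcont⟩ with hTc
    exact ⟨‖Tc‖, norm_nonneg _, fun h => Tc.le_opNorm h⟩
  obtain ⟨CT, hCT0, hT_bound⟩ := hTB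
  intro L u hu n un hunS hun
  set S : Set V := (Vn n : Set V) with hSdef
  have h0S : (0 : V) ∈ S := (Vn n).zero_mem
  have hSne : S.Nonempty := ⟨0, h0S⟩
  -- scaling of the distance to the subspace
  have hscale : ∀ (r : 𝕜) (w : V), infDist (r • w) S ≤ ‖r‖ * infDist w S := by
    intro r w
    rcases eq_or_ne r 0 with h0 | h0
    · rw [h0, zero_smul, infDist_zero_of_mem h0S, norm_zero, zero_mul]
    · have hr : 0 < ‖r‖ := norm_pos_iff.mpr h0
      by_contra hcon
      push_neg at hcon
      have hlt : infDist w S < infDist (r • w) S / ‖r‖ := by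
        rw [lt_div_iff₀ hr]
        nlinarith [hcon]
      obtain ⟨χ, hχS, hχ⟩ := (infDist_lt_iff hSne).mp hlt
      have hmem : r • χ ∈ S := (Vn n).smul_mem r hχS
      have h1 : infDist (r • w) S ≤ dist (r • w) (r • χ) := infDist_le_dist_of_mem hmem
      rw [dist_smul₀] at h1
      rw [lt_div_iff₀ hr] at hχ
      nlinarith [h1, hχ]
  -- nonnegativity of the two suprema
  set γ₁ : ℝ := sSup {c : ℝ | ∃ g : X, ‖g‖ = 1 ∧ c = infDist (Ainv (e g)) (Vn n : Set V)}
    with hγ₁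
  set γ₂ : ℝ := sSup {c : ℝ | ∃ h : H, ‖h‖ = 1 ∧ c = infDist (Astarinv (j h)) (Vn n : Set V)}
    with hγ₂
  have hγ₁0 : 0 ≤ γ₁ := by
    apply Real.sSup_nonneg
    rintro x ⟨g, hg, rfl⟩
    exact infDist_nonneg
  have hγ₂0 : 0 ≤ γ₂ := by
    apply Real.sSup_nonneg
    rintro x ⟨g, hg, rfl⟩
    exact infDist_nonneg
  -- trivial case
  by_cases hh0 : i u - i un = 0
  · rw [hh0, norm_zero]
    have : (0:ℝ) ≤ M ^ 2 / β := by positivity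
    positivity
  -- main case
  have huun0 : u - un ≠ 0 := by
    intro hcon
    apply hh0
    rw [← map_sub, hcon, map_zero]
  -- Galerkin orthogonality
  have horth : ∀ χ, χ ∈ S → a (u - un) χ = 0 := by
    intro χ hχ
    rw [map_sub, ContinuousLinearMap.sub_apply, hu χ, hun χ hχ, sub_self]
  -- β ≤ M
  have hβM : β ≤ M := by
    have ht := happrox (u - un)
    have hpos : (0:ℝ) < ‖u - un‖ := norm_pos_iff.mpr huun0
    obtain ⟨m, hm⟩ := (ht.eventually_lt_const hpos).exists
    obtain ⟨x, hxm, hxd⟩ := (infDist_lt_iff ⟨0, (Vn m).zero_mem⟩).mp hm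
    have hx0 : x ≠ 0 := by
      intro hcon
      rw [hcon, dist_zero_right] at hxd
      exact lt_irrefl _ hxd
    have h1 := hBNB m x hxm
    have h2 : sSup {c : ℝ | ∃ v ∈ Vn m, ‖v‖ = 1 ∧ c = ‖a x v‖} ≤ M * ‖x‖ := by
      apply Real.sSup_le
      · rintro _ ⟨v, hv, hv1, rfl⟩
        calc ‖a x v‖ ≤ M * ‖x‖ * ‖v‖ := hbound x v
          _ = M * ‖x‖ := by rw [hv1, mul_one]
      · positivity
    have hxpos : (0:ℝ) < ‖x‖ := norm_pos_iff.mpr hx0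
    nlinarith [le_trans h1 h2]
  have hCM : 1 ≤ M / β := (one_le_div hβ).mpr hβM
  -- Céa-type estimate with constant M/β
  have hkey : ∀ χ, χ ∈ S → ‖u - un‖ ≤ (M / β) * ‖u - χ‖ := by
    intro χ hχ
    have hstep : ∀ t : ℝ, ‖(t : 𝕜) • (un - χ)‖ ≤ (M / β) * ‖(u - un) - (t : 𝕜) • (un - χ)‖ := by
      intro t
      set z : V := (t : 𝕜) • (un - χ) with hz
      have hzm : z ∈ Vn n := (Vn n).smul_mem _ ((Vn n).sub_mem hunS hχ)
      have h1 := hBNB n z hzm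
      have h2 : sSup {c : ℝ | ∃ v ∈ Vn n, ‖v‖ = 1 ∧ c = ‖a z v‖} ≤ M * ‖(u - un) - z‖ := by
        apply Real.sSup_le
        · rintro _ ⟨v, hv, hv1, rfl⟩
          have h3 : a z v = a (z - (u - un)) v := by
            rw [map_sub, ContinuousLinearMap.sub_apply, horth v hv, sub_zero]
          rw [h3]
          calc ‖a (z - (u - un)) v‖ ≤ M * ‖z - (u - un)‖ * ‖v‖ := hbound _ _
            _ = M * ‖(u - un) - z‖ := by rw [hv1, mul_one, norm_sub_rev]
        · positivity
      have h4 : β * ‖z‖ ≤ M * ‖(u - un) - z‖ := le_trans h1 h2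
      rw [div_mul_eq_mul_div, le_div_iff₀ hβ]
      nlinarith [h4]
    have h5 := cea_aux (𝕜 := 𝕜) (M / β) hCM (un - χ) (u - un) hstep
    rwa [show un - χ + (u - un) = u - χ by abel] at h5
  have hcea : ‖u - un‖ ≤ (M / β) * infDist u S := by
    have hMβ : (0:ℝ) < M / β := by positivity
    by_contra hcon
    push_neg at hcon
    have hlt : infDist u S < ‖u - un‖ / (M / β) := by
      rw [lt_div_iff₀ hMβ]
      nlinarith [hcon]
    obtain ⟨χ, hχS, hχ⟩ := (infDist_lt_iff hSne).mp hlt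
    have h6 := hkey χ hχS
    rw [dist_eq_norm, lt_div_iff₀ hMβ] at hχ
    nlinarith [h6]
  -- `u` is the exact solution: `u = Ainv (e L)` and `L ≠ 0`
  have hueq : u = Ainv (e L) := by
    apply huniq1
    intro v
    rw [hu v, hAinv]
  have hL0 : L ≠ 0 := by
    intro hcon
    apply huun0
    have hu0 : u = 0 := by
      apply hinj1
      intro v
      rw [hu v, hcon]
      simp
    have hun0 : un = 0 := by
      have h1 := hBNB n un hunS
      have h2 : sSup {c : ℝ | ∃ v ∈ Vn n, ‖v‖ = 1 ∧ c = ‖a un v‖} ≤ 0 := by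
        apply Real.sSup_le _ le_rfl
        rintro _ ⟨v, hv, hv1, rfl⟩
        have : a un v = 0 := by
          rw [hun v hv, hcon]
          simp
        rw [this, norm_zero]
      have h3 : ‖un‖ ≤ 0 := by nlinarith [le_trans h1 h2]
      exact norm_le_zero_iff.mp h3
    rw [hu0, hun0, sub_self]
  -- bound `infDist u S ≤ ‖L‖ * γ₁`
  have hLn : (0:ℝ) < ‖L‖ := norm_pos_iff.mpr hL0
  have hAinv_smul : ∀ (c : 𝕜) (f : StrongDual 𝕜 V), Ainv (c • f) = c • Ainv f := by
    intro c f
    apply huniq1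
    intro v
    have ha1 : a (Ainv (c • f)) v = c * f v := by
      rw [hAinv]
      simp
    have ha2 : a (c • Ainv f) v = c * f v := by
      rw [map_smul a, ContinuousLinearMap.smul_apply, hAinv, smul_eq_mul]
    rw [ha1, ha2]
  have hbdd1 : BddAbove {c : ℝ | ∃ g : X, ‖g‖ = 1 ∧ c = infDist (Ainv (e g)) (Vn n : Set V)} := by
    refine ⟨CE * ‖e‖, ?_⟩
    rintro _ ⟨g, hg, rfl⟩
    calc infDist (Ainv (e g)) (Vn n : Set V) ≤ dist (Ainv (e g)) 0 :=
          infDist_le_dist_of_mem h0S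
      _ = ‖Ainv (e g)‖ := by rw [dist_zero_right]
      _ ≤ CE * ‖e g‖ := hAinv_bound (e g)
      _ ≤ CE * (‖e‖ * ‖g‖) := by
          exact mul_le_mul_of_nonneg_left (e.le_opNorm g) hCE0
      _ = CE * ‖e‖ := by rw [hg, mul_one]
  set g : X := ((‖L‖⁻¹ : ℝ) : 𝕜) • L with hgdef
  have hgnorm : ‖g‖ = 1 := by
    rw [hgdef, norm_smul, RCLike.norm_ofReal, abs_of_nonneg (by positivity)]
    field_simp
  have hγ1mem : infDist (Ainv (e g)) (Vn n : Set V) ≤ γ₁ :=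
    le_csSup hbdd1 ⟨g, hgnorm, rfl⟩
  have hLsmul : ((‖L‖ : ℝ) : 𝕜) • g = L := by
    rw [hgdef, smul_smul, ← RCLike.ofReal_mul, mul_inv_cancel₀ (ne_of_gt hLn)]
    simp
  have hdistu : infDist u S ≤ ‖L‖ * γ₁ := by
    have h1 : u = ((‖L‖ : ℝ) : 𝕜) • Ainv (e g) := by
      rw [hueq, ← hAinv_smul, ← map_smul, hLsmul]
    calc infDist u S = infDist (((‖L‖ : ℝ) : 𝕜) • Ainv (e g)) S := by rw [h1]
      _ ≤ ‖((‖L‖ : ℝ) : 𝕜)‖ * infDist (Ainv (e g)) S := hscale _ _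
      _ = ‖L‖ * infDist (Ainv (e g)) S := by
          rw [RCLike.norm_ofReal, abs_of_nonneg (norm_nonneg L)]
      _ ≤ ‖L‖ * γ₁ := mul_le_mul_of_nonneg_left hγ1mem (norm_nonneg L)
  -- the adjoint auxiliary solution
  set hH : H := i u - i un with hHdef
  have hHpos : (0:ℝ) < ‖hH‖ := norm_pos_iff.mpr hh0
  set w : V := Astarinv (j hH) with hwdef
  have hiuun : i (u - un) = hH := by rw [map_sub]
  have h1 : a (u - un) w = ((‖hH‖ : 𝕜)) ^ 2 := by
    rw [hwdef, hAstarinv, hj, hiuun, inner_self_eq_norm_sq_to_K]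
    rw [map_pow, RCLike.conj_ofReal]
  have h1n : ‖a (u - un) w‖ = ‖hH‖ ^ 2 := by
    rw [h1, norm_pow, RCLike.norm_ofReal, abs_norm]
  have hkeyH : ‖hH‖ ^ 2 ≤ M * ‖u - un‖ * infDist w S := by
    have hval : ∀ χ, χ ∈ S → ‖hH‖ ^ 2 ≤ M * ‖u - un‖ * ‖w - χ‖ := by
      intro χ hχ
      have h2 : a (u - un) w = a (u - un) (w - χ) := by
        rw [map_sub (a (u - un)) w χ, horth χ hχ, sub_zero]
      calc ‖hH‖ ^ 2 = ‖a (u - un) (w - χ)‖ := by rw [← h2, h1n]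
        _ ≤ M * ‖u - un‖ * ‖w - χ‖ := hbound _ _
    have hMu : 0 < M * ‖u - un‖ := by
      have : (0:ℝ) < ‖u - un‖ := norm_pos_iff.mpr huun0
      positivity
    by_contra hcon
    push_neg at hcon
    have hlt : infDist w S < ‖hH‖ ^ 2 / (M * ‖u - un‖) := by
      rw [lt_div_iff₀ hMu]
      nlinarith [hcon]
    obtain ⟨χ, hχS, hχ⟩ := (infDist_lt_iff hSne).mp hlt
    have h7 := hval χ hχS
    rw [dist_eq_norm, lt_div_iff₀ hMu] at hχ
    nlinarith [h7]
  -- bound `infDist w S ≤ ‖hH‖ * γ₂`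
  have hbdd2 : BddAbove {c : ℝ | ∃ h : H, ‖h‖ = 1 ∧ c = infDist (Astarinv (j h)) (Vn n : Set V)} := by
    refine ⟨CT, ?_⟩
    rintro _ ⟨h, hh, rfl⟩
    calc infDist (Astarinv (j h)) (Vn n : Set V) ≤ dist (Astarinv (j h)) 0 :=
          infDist_le_dist_of_mem h0S
      _ = ‖Astarinv (j h)‖ := by rw [dist_zero_right]
      _ ≤ CT * ‖h‖ := hT_bound h
      _ = CT := by rw [hh, mul_one]
  set h' : H := ((‖hH‖⁻¹ : ℝ) : 𝕜) • hH with h'def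
  have h'norm : ‖h'‖ = 1 := by
    rw [h'def, norm_smul, RCLike.norm_ofReal, abs_of_nonneg (by positivity)]
    field_simp
  have hmem2 : infDist (Astarinv (j h')) (Vn n : Set V) ≤ γ₂ :=
    le_csSup hbdd2 ⟨h', h'norm, rfl⟩
  have hTsmul' : Astarinv (j h') = ((‖hH‖⁻¹ : ℝ) : 𝕜) • w := by
    rw [h'def, hTsmul, hwdef]
  have hdistw : infDist w S ≤ ‖hH‖ * γ₂ := by
    have hws : w = ((‖hH‖ : ℝ) : 𝕜) • Astarinv (j h') := by
      rw [hTsmul', smul_smul, ← RCLike.ofReal_mul, mul_inv_cancel₀ (ne_of_gt hHpos)]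
      simp
    calc infDist w S = infDist ((((‖hH‖ : ℝ)) : 𝕜) • Astarinv (j h')) S := by rw [← hws]
      _ ≤ ‖(((‖hH‖ : ℝ)) : 𝕜)‖ * infDist (Astarinv (j h')) S := hscale _ _
      _ = ‖hH‖ * infDist (Astarinv (j h')) S := by
          rw [RCLike.norm_ofReal, abs_of_nonneg (norm_nonneg _)]
      _ ≤ ‖hH‖ * γ₂ := mul_le_mul_of_nonneg_left hmem2 (norm_nonneg _)
  -- assemble everything
  have hMβ0 : (0:ℝ) ≤ M / β := le_of_lt (div_pos hM hβ)
  have hLγ0 : (0:ℝ) ≤ ‖L‖ * γ₁ := mul_nonneg (norm_nonneg L) hγ₁0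
  have s1 : M * ‖u - un‖ * infDist w S ≤ M * ((M / β) * infDist u S) * infDist w S :=
    mul_le_mul_of_nonneg_right (mul_le_mul_of_nonneg_left hcea (le_of_lt hM)) infDist_nonneg
  have s2 : M * ((M / β) * infDist u S) * infDist w S
      ≤ M * ((M / β) * (‖L‖ * γ₁)) * infDist w S := by
    apply mul_le_mul_of_nonneg_right _ infDist_nonneg
    apply mul_le_mul_of_nonneg_left _ (le_of_lt hM)
    exact mul_le_mul_of_nonneg_left hdistu hMβ0
  have s3 : M * ((M / β) * (‖L‖ * γ₁)) * infDist w S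
      ≤ M * ((M / β) * (‖L‖ * γ₁)) * (‖hH‖ * γ₂) :=
    mul_le_mul_of_nonneg_left hdistw
      (mul_nonneg (le_of_lt hM) (mul_nonneg hMβ0 hLγ0))
  have s4 : M * ((M / β) * (‖L‖ * γ₁)) * (‖hH‖ * γ₂)
      = (M ^ 2 / β * γ₁ * γ₂ * ‖L‖) * ‖hH‖ := by ring
  have hbase : ‖hH‖ ^ 2 ≤ (M ^ 2 / β * γ₁ * γ₂ * ‖L‖) * ‖hH‖ := by
    rw [← s4]
    linarith [hkeyH, s1, s2, s3]
  have h9 : ‖hH‖ * ‖hH‖ ≤ (M ^ 2 / β * γ₁ * γ₂ * ‖L‖) * ‖hH‖ := by nlinarith [hbase]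
  exact le_of_mul_le_mul_right h9 hHpos
end

section
/- Let V ↪ V' via an invertible operator 𝒜 associated to a form a satisfying the uniform inf-sup condition, let X ↪ V' be a continuously embedded Banach space, and define γ_n(X) = sup_{f ∈ X, ‖f‖_X=1} dist(𝒜⁻¹f, V_n) for an approximating sequence (V_n) of the Hilbert space V. Then γ_n(X) → 0 as n → ∞ if and only if the embedding X ↪ V' is compact. -/
open Metric Filter

/-- A continuous linear map whose range lies in a finite-dimensional submodule is a
compact operator. -/
lemma aux_isCompactOperator_of_range_le {𝕜 : Type*} [RCLike 𝕜] {X V : Type*}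
    [NormedAddCommGroup X] [NormedSpace 𝕜 X] [NormedAddCommGroup V] [NormedSpace 𝕜 V]
    (g : X →L[𝕜] V) (W : Submodule 𝕜 V) [FiniteDimensional 𝕜 W]
    (hg : ∀ x, g x ∈ W) : IsCompactOperator g := by
  haveI : ProperSpace W := FiniteDimensional.proper 𝕜 W
  refine ⟨Subtype.val '' Metric.closedBall (0 : W) ‖g‖,
    (isCompact_closedBall _ _).image continuous_subtype_val, ?_⟩
  refine Filter.mem_of_superset (Metric.closedBall_mem_nhds 0 one_pos) ?_
  intro x hx
  refine ⟨⟨g x, hg x⟩, ?_, rfl⟩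
  rw [Metric.mem_closedBall, dist_zero_right]
  show ‖g x‖ ≤ ‖g‖
  calc ‖g x‖ ≤ ‖g‖ * ‖x‖ := g.le_opNorm x
    _ ≤ ‖g‖ * 1 := by
        have := Metric.mem_closedBall.mp hx
        rw [dist_zero_right] at this
        exact mul_le_mul_of_nonneg_left this (norm_nonneg g)
    _ = ‖g‖ := mul_one _

/-- `γₙ(X) → 0` as `n → ∞` iff the embedding `X ↪ V'` is compact. -/
theorem stmt16 {𝕜 : Type*} [RCLike 𝕜]
    {V X : Type*}
    [NormedAddCommGroup V] [InnerProductSpace 𝕜 V] [CompleteSpace V]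
    [TopologicalSpace.SeparableSpace V]
    [NormedAddCommGroup X] [NormedSpace 𝕜 X]
    (A : V ≃L[𝕜] StrongDual 𝕜 V)
    (j : X →L[𝕜] StrongDual 𝕜 V) (hjInj : Function.Injective j)
    (Vn : ℕ → Subspace 𝕜 V) (hfin : ∀ n, FiniteDimensional 𝕜 (Vn n))
    (happrox : ∀ v : V, Tendsto (fun n => infDist v (Vn n : Set V)) atTop (nhds 0)) :
    Tendsto (fun n =>
        sSup {c : ℝ | ∃ f : X, ‖f‖ = 1 ∧ c = infDist (A.symm (j f)) (Vn n : Set V)})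
      atTop (nhds 0) ↔ IsCompactOperator j := by
  rcases subsingleton_or_nontrivial X with hX | hX
  · -- trivial case: both sides hold
    constructor
    · intro _
      refine ⟨{0}, isCompact_singleton, ?_⟩
      have : (⇑j) ⁻¹' {0} = Set.univ := by
        ext x
        simp [Subsingleton.elim x (0 : X)]
      rw [this]
      exact Filter.univ_mem
    · intro _
      have hset : ∀ n, {c : ℝ | ∃ f : X, ‖f‖ = 1 ∧ c = infDist (A.symm (j f)) (Vn n : Set V)}
          = ∅ := by
        intro n
        ext c
        simp only [Set.mem_setOf_eq, Set.mem_empty_iff_false, iff_false]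
        rintro ⟨f, hf, -⟩
        rw [Subsingleton.elim f (0 : X), norm_zero] at hf
        exact one_ne_zero hf.symm
      simp only [hset, Real.sSup_empty]
      exact tendsto_const_nhds
  -- nontrivial case
  set T : X →L[𝕜] V := (A.symm : StrongDual 𝕜 V →L[𝕜] V).comp j with hT
  have hTapp : ∀ f : X, T f = A.symm (j f) := fun _ => rfl
  set S : ℕ → Set ℝ :=
    fun n => {c : ℝ | ∃ f : X, ‖f‖ = 1 ∧ c = infDist (A.symm (j f)) (Vn n : Set V)} with hS
  obtain ⟨x₀, hx₀⟩ := exists_ne (0 : X)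
  have hne : ∀ n, (S n).Nonempty := by
    intro n
    exact ⟨_, (‖x₀‖⁻¹ : 𝕜) • x₀, norm_smul_inv_norm hx₀, rfl⟩
  have hmem : ∀ n (f : X), ‖f‖ = 1 → infDist (T f) (Vn n : Set V) ∈ S n := by
    intro n f hf
    exact ⟨f, hf, rfl⟩
  have hbdd : ∀ n, BddAbove (S n) := by
    intro n
    refine ⟨‖T‖, ?_⟩
    rintro c ⟨f, hf, rfl⟩
    calc infDist (A.symm (j f)) (Vn n : Set V) ≤ dist (A.symm (j f)) 0 :=
          infDist_le_dist_of_mem (Vn n).zero_mem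
      _ = ‖T f‖ := by rw [dist_zero_right, hTapp]
      _ ≤ ‖T‖ * ‖f‖ := T.le_opNorm f
      _ = ‖T‖ := by rw [hf, mul_one]
  have hnonneg : ∀ n, 0 ≤ sSup (S n) := by
    intro n
    obtain ⟨c, hc⟩ := hne n
    obtain ⟨f, hf, rfl⟩ := hc
    exact le_trans infDist_nonneg (le_csSup (hbdd n) ⟨f, hf, rfl⟩)
  constructor
  · -- γₙ → 0 ⇒ compact
    intro hγ
    haveI : ∀ n, CompleteSpace (Vn n) := fun n => (hfin n).complete 𝕜 _
    set Tn : ℕ → (X →L[𝕜] V) :=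
      fun n => ((Vn n).subtypeL.comp (Vn n).orthogonalProjection).comp T with hTn
    have hrange : ∀ n x, Tn n x ∈ Vn n := fun n x => SetLike.coe_mem _
    have hdist : ∀ n (f : X), ‖f‖ = 1 → ‖T f - Tn n f‖ = infDist (T f) (Vn n : Set V) := by
      intro n f hf
      have := Submodule.starProjection_minimal (U := Vn n) (T f)
      rw [infDist_eq_iInf]
      simp only [dist_eq_norm]
      exact this
    have hclose : ∀ n (f : X), ‖T f - Tn n f‖ ≤ sSup (S n) * ‖f‖ := by
      intro n f
      rcases eq_or_ne f 0 with rfl | hf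
      · simp
      · set g : X := (‖f‖⁻¹ : 𝕜) • f with hg
        have hgnorm : ‖g‖ = 1 := norm_smul_inv_norm hf
        have hfg : f = (‖f‖ : 𝕜) • g := by
          rw [hg, smul_smul, mul_inv_cancel₀, one_smul]
          exact_mod_cast norm_ne_zero_iff.mpr hf
        have h1 : T f - Tn n f = (‖f‖ : 𝕜) • (T g - Tn n g) := by
          rw [smul_sub, ← map_smul, ← map_smul, ← hfg]
        have h2 : ‖T g - Tn n g‖ ≤ sSup (S n) := by
          rw [hdist n g hgnorm]
          exact le_csSup (hbdd n) (hmem n g hgnorm)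
        rw [h1, norm_smul, RCLike.norm_ofReal, abs_norm, mul_comm]
        exact mul_le_mul_of_nonneg_right h2 (norm_nonneg f)
    have hop : ∀ n, ‖Tn n - T‖ ≤ sSup (S n) := by
      intro n
      refine ContinuousLinearMap.opNorm_le_bound _ (hnonneg n) fun f => ?_
      rw [ContinuousLinearMap.sub_apply, norm_sub_rev]
      exact hclose n f
    have htendsto : Tendsto Tn atTop (nhds T) := by
      rw [tendsto_iff_norm_sub_tendsto_zero]
      exact squeeze_zero (fun n => norm_nonneg _) hop hγ
    have hTcompact : IsCompactOperator T :=
      isCompactOperator_of_tendsto htendsto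
        (Filter.Eventually.of_forall fun n =>
          aux_isCompactOperator_of_range_le (Tn n) (Vn n) (hrange n))
    have hjT : ⇑j = ⇑A ∘ ⇑T := by
      funext f
      simp [hTapp]
    rw [show IsCompactOperator j = IsCompactOperator (⇑j) from rfl, hjT]
    exact hTcompact.continuous_comp A.continuous
  · -- compact ⇒ γₙ → 0
    intro hj
    have hTcompact : IsCompactOperator T := by
      have : ⇑T = ⇑A.symm ∘ ⇑j := rfl
      rw [show IsCompactOperator T = IsCompactOperator (⇑T) from rfl, this]
      exact hj.continuous_comp A.symm.continuous
    have hK : IsCompact (closure ((⇑T) '' Metric.closedBall 0 1)) := by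
      have := hTcompact.isCompact_closure_image_closedBall (𝕜₁ := 𝕜)
        (f := (T : X →ₗ[𝕜] V)) 1
      simpa using this
    set K : Set V := closure ((⇑T) '' Metric.closedBall 0 1) with hKdef
    rw [Metric.tendsto_atTop]
    intro ε hε
    have hδ : 0 < ε / 4 := by linarith
    -- finite subcover of K by balls of radius ε/4
    obtain ⟨t, -, hcover⟩ := hK.elim_nhds_subcover (fun v => Metric.ball v (ε / 4))
      (fun v _ => Metric.ball_mem_nhds v hδ)
    -- pick N such that infDist x (Vn n) < ε/4 for all centers x ∈ t and n ≥ N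
    have hev : ∀ᶠ n in atTop, ∀ x ∈ t, infDist x (Vn n : Set V) < ε / 4 := by
      rw [Filter.eventually_all_finset]
      intro x _
      have := (happrox x).eventually (eventually_lt_nhds hδ) -- infDist < ε/4 eventually
      simpa using this
    obtain ⟨N, hN⟩ := Filter.eventually_atTop.mp hev
    refine ⟨N, fun n hn => ?_⟩
    have hbound : sSup (S n) ≤ ε / 2 := by
      refine Real.sSup_le ?_ (by linarith)
      rintro c ⟨f, hf, rfl⟩
      have hfK : T f ∈ K := by
        apply subset_closure
        exact ⟨f, by simp [hf], rfl⟩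
      obtain ⟨x, hxt, hxball⟩ := Set.mem_iUnion₂.mp (hcover hfK)
      calc infDist (A.symm (j f)) (Vn n : Set V)
          ≤ infDist x (Vn n : Set V) + dist (A.symm (j f)) x :=
            infDist_le_infDist_add_dist
        _ ≤ ε / 4 + ε / 4 := by
            refine add_le_add (le_of_lt (hN n hn x hxt)) ?_
            have : dist (T f) x < ε / 4 := Metric.mem_ball.mp hxball
            rw [hTapp] at this
            exact le_of_lt this
        _ = ε / 2 := by ring
    have : |sSup (S n) - 0| < ε := by
      rw [sub_zero, abs_of_nonneg (hnonneg n)]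
      calc sSup (S n) ≤ ε / 2 := hbound
        _ < ε := by linarith
    rw [Real.dist_eq]
    exact this
end

section
/- Let U, V be separable reflexive Banach spaces and a : U × V → 𝕂 a continuous sesquilinear form whose associated operator 𝒜 : U → V' is invertible. If U admits a sequence of finite-rank projections (P_n) with P_n u → u for all u ∈ U and P_m P_n = P_n P_m = P_m for n ≥ m (a finite-dimensional Schauder decomposition), then there exist approximating sequences (U_n) of U and (V_n) of V such that the associated Petrov–Galerkin approximation converges: for each L ∈ V' the discrete solutions u_n ∈ U_n exist uniquely and satisfy ‖u − u_n‖ ≤ γ · dist(u, U_n) for a constant γ independent of n and L. -/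
open Metric Filter

lemma aux_sep19 {𝕜 E : Type*} [RCLike 𝕜] [NormedAddCommGroup E] [NormedSpace 𝕜 E]
    (S : Submodule 𝕜 E) (hS : IsClosed (S : Set E)) {x : E} (hx : x ∉ S) :
    ∃ f : E →L[𝕜] 𝕜, (∀ y ∈ S, f y = 0) ∧ f x ≠ 0 := by
  letI : NormedSpace ℝ E := NormedSpace.restrictScalars ℝ 𝕜 E
  letI : IsScalarTower ℝ 𝕜 E := RestrictScalars.isScalarTower ℝ 𝕜 E
  obtain ⟨f, u, hfS, hfx⟩ :=
    RCLike.geometric_hahn_banach_closed_point (𝕜 := 𝕜) ((S.restrictScalars ℝ).convex) hS hx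
  have hu : 0 < u := by
    have h0 := hfS 0 S.zero_mem
    simpa using h0
  refine ⟨f, ?_, ?_⟩
  · intro y hy
    by_contra h
    have hmem : (((u : 𝕜) * (f y)⁻¹) • y) ∈ S := S.smul_mem _ hy
    have h2 := hfS _ hmem
    rw [map_smul, smul_eq_mul, mul_assoc, inv_mul_cancel₀ h, mul_one] at h2
    simp at h2
  · intro h
    rw [h] at hfx
    simp at hfx
    exact absurd (hu.trans hfx) (lt_irrefl 0)

set_option maxHeartbeats 1000000 in
/-- if the well-posed problem lives on a space `U` admitting a
finite-dimensional Schauder decomposition (a sequence of commuting finite-rank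
projections converging strongly to the identity), then there exist approximating
sequences `(Uₙ)`, `(Vₙ)` for which the Petrov–Galerkin approximation converges. -/
theorem stmt19 {𝕜 : Type*} [RCLike 𝕜]
    {U V : Type*} [NormedAddCommGroup U] [NormedSpace 𝕜 U] [CompleteSpace U]
    [NormedAddCommGroup V] [NormedSpace 𝕜 V] [CompleteSpace V]
    [TopologicalSpace.SeparableSpace U] [TopologicalSpace.SeparableSpace V]
    (hUrefl : Function.Bijective (NormedSpace.inclusionInDoubleDual 𝕜 U))
    (hVrefl : Function.Bijective (NormedSpace.inclusionInDoubleDual 𝕜 V))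
    (a : U →L[𝕜] V →L[𝕜] 𝕜) (M : ℝ)
    (hbound : ∀ u v, ‖a u v‖ ≤ M * ‖u‖ * ‖v‖)
    -- well-posedness: the associated operator `𝒜 : U → V'` is invertible
    (hwp : ∀ L : StrongDual 𝕜 V, ∃! u : U, ∀ v : V, a u v = L v)
    -- a finite-dimensional Schauder decomposition of `U`
    (P : ℕ → U →L[𝕜] U)
    (hPfin : ∀ n, FiniteDimensional 𝕜 (LinearMap.range (P n : U →ₗ[𝕜] U)))
    (hPtend : ∀ u : U, Tendsto (fun n => P n u) atTop (nhds u))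
    (hPcomm : ∀ m n, m ≤ n → (P m).comp (P n) = P m ∧ (P n).comp (P m) = P m) :
    ∃ (Un : ℕ → Subspace 𝕜 U) (Vn : ℕ → Subspace 𝕜 V) (γ : ℝ), 0 < γ ∧
      (∀ n, FiniteDimensional 𝕜 (Un n)) ∧ (∀ n, FiniteDimensional 𝕜 (Vn n)) ∧
      (∀ u : U, Tendsto (fun n => infDist u (Un n : Set U)) atTop (nhds 0)) ∧
      (∀ v : V, Tendsto (fun n => infDist v (Vn n : Set V)) atTop (nhds 0)) ∧
      ∀ L : StrongDual 𝕜 V,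
        (∀ n, ∃! un : U, un ∈ Un n ∧ ∀ χ ∈ Vn n, a un χ = L χ) ∧
        (∀ u : U, (∀ v : V, a u v = L v) →
          ∀ n, ∀ un ∈ Un n, (∀ χ ∈ Vn n, a un χ = L χ) →
            ‖u - un‖ ≤ γ * infDist u (Un n : Set U)) := by
  classical
  -- the operator 𝒜 is a continuous linear equivalence
  have hker : LinearMap.ker (a : U →ₗ[𝕜] StrongDual 𝕜 V) = ⊥ := by
    rw [LinearMap.ker_eq_bot]
    intro u₁ u₂ h
    obtain ⟨w, -, huniq⟩ := hwp (a u₂)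
    exact (huniq u₁ fun v => by rw [show a u₁ = a u₂ from h]).trans (huniq u₂ fun v => rfl).symm
  have hrange : LinearMap.range (a : U →ₗ[𝕜] StrongDual 𝕜 V) = ⊤ := by
    rw [LinearMap.range_eq_top]
    intro L
    obtain ⟨w, hw, -⟩ := hwp L
    exact ⟨w, ContinuousLinearMap.ext hw⟩
  let A : U ≃L[𝕜] StrongDual 𝕜 V := ContinuousLinearEquiv.ofBijective a hker hrange
  have hA : ∀ u : U, A u = a u := fun u => rfl
  let ιV : V ≃L[𝕜] StrongDual 𝕜 (StrongDual 𝕜 V) :=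
    ContinuousLinearEquiv.ofBijective (𝕜 := 𝕜) (𝕜' := 𝕜) (σ := RingHom.id 𝕜) (σ' := RingHom.id 𝕜)
      (E := V) (F := StrongDual 𝕜 (StrongDual 𝕜 V)) (NormedSpace.inclusionInDoubleDual 𝕜 V)
      (LinearMap.ker_eq_bot_of_injective hVrefl.1)
      (LinearMap.range_eq_top_of_surjective _ hVrefl.2)
  -- the representation map J : U' → V
  let Φ : StrongDual 𝕜 U →L[𝕜] StrongDual 𝕜 (StrongDual 𝕜 V) :=
    (ContinuousLinearMap.compSL (StrongDual 𝕜 V) U 𝕜 (RingHom.id 𝕜) (RingHom.id 𝕜)).flip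
      (A.symm : StrongDual 𝕜 V →L[𝕜] U)
  have hΦ : ∀ (f : StrongDual 𝕜 U) (L : StrongDual 𝕜 V), Φ f L = f (A.symm L) :=
    fun f L => rfl
  let J : StrongDual 𝕜 U →L[𝕜] V :=
    (ιV.symm : StrongDual 𝕜 (StrongDual 𝕜 V) →L[𝕜] V).comp Φ
  have hJ : ∀ (f : StrongDual 𝕜 U) (w : U), a w (J f) = f w := by
    intro f w
    have h1 : NormedSpace.inclusionInDoubleDual 𝕜 V (J f) = Φ f := ιV.apply_symm_apply (Φ f)
    calc a w (J f) = (NormedSpace.inclusionInDoubleDual 𝕜 V (J f)) (a w) := rfl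
      _ = (Φ f) (a w) := by rw [h1]
      _ = f (A.symm (A w)) := rfl
      _ = f w := by rw [A.symm_apply_apply]
  -- the dual projections
  let Q : ℕ → StrongDual 𝕜 U →L[𝕜] StrongDual 𝕜 U := fun n =>
    (ContinuousLinearMap.compSL U U 𝕜 (RingHom.id 𝕜) (RingHom.id 𝕜)).flip (P n)
  have hQ : ∀ n (f : StrongDual 𝕜 U), Q n f = f.comp (P n) := fun n f => rfl
  let Fn : ℕ → Submodule 𝕜 (StrongDual 𝕜 U) := fun n => LinearMap.range (Q n : StrongDual 𝕜 U →ₗ[𝕜] StrongDual 𝕜 U)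
  let Un : ℕ → Subspace 𝕜 U := fun n => LinearMap.range (P n : U →ₗ[𝕜] U)
  let Vn : ℕ → Subspace 𝕜 V := fun n =>
    Submodule.map (J : StrongDual 𝕜 U →ₗ[𝕜] V) (Fn n)

  -- finite dimensionality of Fn
  have hFfin : ∀ n, FiniteDimensional 𝕜 (Fn n) := by
    intro n
    haveI := hPfin n
    set W := LinearMap.range (P n : U →ₗ[𝕜] U) with hW
    let pc : U →L[𝕜] W := (P n).codRestrict W (fun x => LinearMap.mem_range_self _ x)
    let ψ : (W →L[𝕜] 𝕜) →L[𝕜] StrongDual 𝕜 U :=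
      (ContinuousLinearMap.compSL U W 𝕜 (RingHom.id 𝕜) (RingHom.id 𝕜)).flip pc
    let χl : (W →ₗ[𝕜] 𝕜) →ₗ[𝕜] StrongDual 𝕜 U :=
      (ψ.toLinearMap).comp (LinearMap.toContinuousLinearMap.toLinearMap)
    have hle : Fn n ≤ LinearMap.range χl := by
      rintro x ⟨f, rfl⟩
      refine ⟨((f.comp W.subtypeL : W →L[𝕜] 𝕜) : W →ₗ[𝕜] 𝕜), ?_⟩
      ext y
      show (LinearMap.toContinuousLinearMap
          ((f.comp W.subtypeL : W →L[𝕜] 𝕜) : W →ₗ[𝕜] 𝕜)) (pc y) = f ((P n) y)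
      rw [LinearMap.coe_toContinuousLinearMap']
      rfl
    exact Submodule.finiteDimensional_of_le hle
  have hVfin : ∀ n, FiniteDimensional 𝕜 (Vn n) := by
    intro n
    haveI := hFfin n
    exact Module.Finite.map _ _
  -- monotonicity
  have hFmono : Monotone Fn := by
    intro m n hmn
    rintro x ⟨f, rfl⟩
    exact ⟨f.comp (P m), by
      rw [ContinuousLinearMap.coe_coe, ContinuousLinearMap.coe_coe, hQ, hQ,
        ContinuousLinearMap.comp_assoc, (hPcomm m n hmn).1]⟩
  -- uniform bound on the projections
  obtain ⟨C, hC⟩ := banach_steinhaus (g := P) (fun x => by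
    obtain ⟨b, hb⟩ := ((hPtend x).norm).bddAbove_range
    exact ⟨b, fun n => hb (Set.mem_range_self n)⟩)
  have hC0 : 0 ≤ C := (norm_nonneg (P 0)).trans (hC 0)
  -- density of the union of the Fn
  have hFdist : ∀ f : StrongDual 𝕜 U, ∀ ε > 0, ∃ N, ∀ n ≥ N,
      infDist f (Fn n : Set (StrongDual 𝕜 U)) < ε := by
    have hdense : ((⨆ n, Fn n).topologicalClosure = ⊤) := by
      by_contra hne
      obtain ⟨f₀, hf₀⟩ : ∃ f₀, f₀ ∉ (⨆ n, Fn n).topologicalClosure := by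
        by_contra h
        push_neg at h
        exact hne (Submodule.eq_top_iff'.mpr h)
      obtain ⟨ξ, hξ0, hξf₀⟩ := aux_sep19 _ (Submodule.isClosed_topologicalClosure _) hf₀
      obtain ⟨x, hx⟩ := hUrefl.2 ξ
      have hPx : ∀ n, P n x = 0 := by
        intro n
        apply NormedSpace.eq_zero_of_forall_dual_eq_zero 𝕜
        intro f
        have hmem : f.comp (P n) ∈ (⨆ n, Fn n).topologicalClosure :=
          Submodule.le_topologicalClosure _ ((le_iSup Fn n) ⟨f, rfl⟩)
        have h5 := hξ0 _ hmem
        rw [← hx] at h5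
        simpa using h5
      have hx0 : x = 0 := by
        have h1 : Tendsto (fun n => P n x) atTop (nhds x) := hPtend x
        have h2 : Tendsto (fun n => P n x) atTop (nhds 0) := by
          have : (fun n => P n x) = fun _ => (0 : U) := funext hPx
          rw [this]
          exact tendsto_const_nhds
        exact tendsto_nhds_unique h1 h2
      apply hξf₀
      rw [← hx, hx0]
      simp
    intro f ε hε
    have hf : f ∈ closure ((⨆ n, Fn n : Submodule 𝕜 (StrongDual 𝕜 U)) :
        Set (StrongDual 𝕜 U)) := by
      rw [← Submodule.topologicalClosure_coe, hdense]
      trivial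
    obtain ⟨g, hg, hfg⟩ := Metric.mem_closure_iff.1 hf ε hε
    obtain ⟨N, hgN⟩ := (Submodule.mem_iSup_of_directed _ (hFmono.directed_le)).1 hg
    exact ⟨N, fun n hn => lt_of_le_of_lt (infDist_le_dist_of_mem (hFmono hn hgN)) hfg⟩
  -- approximation property of Un
  have hUdist : ∀ u : U, Tendsto (fun n => infDist u (Un n : Set U)) atTop (nhds 0) := by
    intro u
    have h0 : Tendsto (fun n => ‖u - P n u‖) atTop (nhds 0) := by
      have h1 := (tendsto_const_nhds (x := u) (f := atTop)).sub (hPtend u)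
      simpa using h1.norm
    refine squeeze_zero (fun n => infDist_nonneg) (fun n => ?_) h0
    exact (infDist_le_dist_of_mem (LinearMap.mem_range_self _ u : P n u ∈ Un n)).trans (le_of_eq (dist_eq_norm u (P n u)))
  -- approximation property of Vn
  have hVdist : ∀ v : V, Tendsto (fun n => infDist v (Vn n : Set V)) atTop (nhds 0) := by
    intro v
    rw [Metric.tendsto_atTop]
    intro ε hε
    set f : StrongDual 𝕜 U := ((ιV v).comp (A : U →L[𝕜] StrongDual 𝕜 V)) with hfdef
    have hJf : J f = v := by
      apply ιV.injective
      show ιV ((ιV.symm : StrongDual 𝕜 (StrongDual 𝕜 V) →L[𝕜] V) (Φ f)) = ιV v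
      rw [ContinuousLinearEquiv.coe_coe, ιV.apply_symm_apply]
      ext L
      show (ιV v) (A (A.symm L)) = (ιV v) L
      rw [A.apply_symm_apply]
    have hε' : 0 < ε / (‖J‖ + 1) := by positivity
    obtain ⟨N, hN⟩ := hFdist f _ hε'
    refine ⟨N, fun n hn => ?_⟩
    have h1 := hN n hn
    have hne : ((Fn n : Set (StrongDual 𝕜 U))).Nonempty := ⟨0, (Fn n).zero_mem⟩
    obtain ⟨g, hg, hfg⟩ := (infDist_lt_iff hne).1 h1
    have hJg : J g ∈ Vn n := Submodule.mem_map_of_mem hg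
    have h2 : infDist v (Vn n : Set V) ≤ dist v (J g) := infDist_le_dist_of_mem hJg
    have h3 : dist v (J g) ≤ (‖J‖ + 1) * dist f g := by
      rw [← hJf, dist_eq_norm, ← map_sub, dist_eq_norm]
      calc ‖J (f - g)‖ ≤ ‖J‖ * ‖f - g‖ := J.le_opNorm _
        _ ≤ (‖J‖ + 1) * ‖f - g‖ := by nlinarith [norm_nonneg (f - g)]
    have h4 : (‖J‖ + 1) * dist f g < ε := by
      have h5 : (‖J‖ + 1) * dist f g < (‖J‖ + 1) * (ε / (‖J‖ + 1)) := by
        apply mul_lt_mul_of_pos_left hfg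
        positivity
      rwa [mul_div_cancel₀] at h5
      positivity
    rw [Real.dist_eq, sub_zero, abs_of_nonneg infDist_nonneg]
    exact lt_of_le_of_lt (h2.trans h3) h4
  -- the identity P n ∘ P n = P n
  have hPP : ∀ n (x : U), P n (P n x) = P n x := by
    intro n x
    exact ContinuousLinearMap.ext_iff.1 (hPcomm n n le_rfl).1 x
  refine ⟨Un, Vn, C + 1, by linarith, fun n => hPfin n, hVfin, hUdist, hVdist, ?_⟩
  intro L
  -- characterization of the discrete solutions
  have hkey : ∀ (u : U), (∀ v : V, a u v = L v) → ∀ n (un : U),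
      ((un ∈ Un n ∧ ∀ χ ∈ Vn n, a un χ = L χ) ↔ un = P n u) := by
    intro u hsol n un
    constructor
    · rintro ⟨⟨w, hw⟩, hdisc⟩
      have hPun : P n un = P n u := by
        rw [NormedSpace.eq_iff_forall_dual_eq 𝕜]
        intro g
        have hχ : J (Q n g) ∈ Vn n := Submodule.mem_map_of_mem ⟨g, rfl⟩
        have h1 := hdisc _ hχ
        rw [hJ] at h1
        have h2 : L (J (Q n g)) = (Q n g) u := by rw [← hsol, hJ]
        rw [h2] at h1
        simpa [hQ] using h1
      have h3 : P n un = un := by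
        calc P n un = P n (P n w) := by rw [show P n w = un from hw]
          _ = P n w := hPP n w
          _ = un := hw
      rw [← h3, hPun]
    · rintro rfl
      refine ⟨⟨u, rfl⟩, ?_⟩
      rintro χ ⟨g', ⟨g, rfl⟩, rfl⟩
      show (a (P n u)) (J (Q n g)) = L (J (Q n g))
      rw [hJ]
      have h2 : L (J (Q n g)) = (Q n g) u := by rw [← hsol, hJ]
      rw [h2, hQ]
      show g (P n (P n u)) = g (P n u)
      rw [hPP]
  obtain ⟨u₀, hu₀, -⟩ := hwp L
  refine ⟨?_, ?_⟩
  · intro n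
    exact ⟨P n u₀, (hkey u₀ hu₀ n _).mpr rfl, fun y hy => (hkey u₀ hu₀ n y).mp hy⟩
  · intro u hsol n un hmem hdisc
    have hun : un = P n u := (hkey u hsol n un).mp ⟨hmem, hdisc⟩
    subst hun
    apply le_of_forall_pos_le_add
    intro ε hε
    have hεγ : 0 < ε / (C + 1) := by positivity
    have hlt : infDist u (Un n : Set U) < infDist u (Un n : Set U) + ε / (C + 1) := by linarith
    have hne : ((Un n : Set U)).Nonempty := ⟨0, (Un n).zero_mem⟩
    obtain ⟨w, hw, hdw⟩ := (infDist_lt_iff hne).1 hlt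
    obtain ⟨w', hw'⟩ := hw
    have hPw : P n w = w := by
      rw [← hw']
      exact hPP n w'
    have heq : u - P n u = (u - w) - P n (u - w) := by
      rw [map_sub, hPw]
      abel
    have hb : ‖u - P n u‖ ≤ (C + 1) * ‖u - w‖ := by
      rw [heq]
      calc ‖(u - w) - P n (u - w)‖ ≤ ‖u - w‖ + ‖P n (u - w)‖ := norm_sub_le _ _
        _ ≤ ‖u - w‖ + C * ‖u - w‖ := by
            have h6 := (P n).le_opNorm (u - w)
            have hCn := hC n
            nlinarith [norm_nonneg (u - w)]
        _ = (C + 1) * ‖u - w‖ := by ring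
    have hdn : ‖u - w‖ = dist u w := (dist_eq_norm u w).symm
    have hmul : (C + 1) * (ε / (C + 1)) = ε := mul_div_cancel₀ _ (by positivity)
    nlinarith [infDist_nonneg (x := u) (s := (Un n : Set U)), hC0]
end
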